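/- arXiv:2010.03417 — 3 statements merged into one kernel-verified Lean document; each statement's English description precedes it below -/
import Mathlib

section
/- Every fully commutative element of W(A_n) can be written uniquely in the normal form ⌈i_1,j_1⌉⌈i_2,j_2⌉···⌈i_p,j_p⌉ with 0 ≤ p ≤ n, n ≥ j_1 > ··· > j_p ≥ 1, n ≥ i_1 > ··· > i_p ≥ 1, and j_t ≥ i_t for all 1 ≤ t ≤ p, where ⌈i,j⌉ = σ_i σ_{i+1} ··· σ_j; conversely every such product is fully commutative and this expression is reduced. -/
open Polynomial Finset

/-- The `i`-th Coxeter generator of `W(A_n)`, viewed as the adjacent transposition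
`(i-1, i)` of `Fin (n+1)` (generators are indexed `1 ≤ i ≤ n`). -/
def sig (n i : ℕ) : Equiv.Perm (Fin (n+1)) :=
  Equiv.swap (Fin.ofNat (n+1) (i-1 : ℕ)) (Fin.ofNat (n+1) (i : ℕ))

/-- A word in the generators `σ_1, ..., σ_n`. -/
def IsWord (n : ℕ) (w : List ℕ) : Prop := ∀ i ∈ w, 1 ≤ i ∧ i ≤ n

/-- The product of a word of generators. -/
def wprod (n : ℕ) (w : List ℕ) : Equiv.Perm (Fin (n+1)) := (w.map (sig n)).prod

/-- The Coxeter length of an element of `W(A_n)`. -/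
noncomputable def len (n : ℕ) (g : Equiv.Perm (Fin (n+1))) : ℕ :=
  sInf {k | ∃ w : List ℕ, IsWord n w ∧ wprod n w = g ∧ w.length = k}

/-- A reduced word. -/
def Reduced (n : ℕ) (w : List ℕ) : Prop :=
  IsWord n w ∧ w.length = len n (wprod n w)

/-- One commutation move `... i j ... ↦ ... j i ...` with `|i - j| ≥ 2`. -/
inductive CommMove : List ℕ → List ℕ → Prop
  | swap (a b : List ℕ) (i j : ℕ) (h : i + 2 ≤ j ∨ j + 2 ≤ i) :
      CommMove (a ++ i :: j :: b) (a ++ j :: i :: b)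

/-- `g ∈ W(A_n)` is fully commutative if any two reduced words for `g` are related
by a sequence of commutation moves. -/
def FC (n : ℕ) (g : Equiv.Perm (Fin (n+1))) : Prop :=
  ∀ w w' : List ℕ, Reduced n w → Reduced n w' → wprod n w = g → wprod n w' = g →
    Relation.ReflTransGen CommMove w w'

/-- The data `(i_1,j_1), ..., (i_p,j_p)` of a Stembridge normal form:
`n ≥ j_1 > ⋯ > j_p ≥ 1`, `n ≥ i_1 > ⋯ > i_p ≥ 1`, `i_t ≤ j_t`, `0 ≤ p ≤ n`. -/
def NFData (n : ℕ) (L : List (ℕ × ℕ)) : Prop :=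
  L.length ≤ n ∧ L.Chain' (fun a b => b.1 < a.1 ∧ b.2 < a.2) ∧
    ∀ p ∈ L, 1 ≤ p.1 ∧ p.1 ≤ p.2 ∧ p.2 ≤ n

/-- The word `⌈i_1,j_1⌉⌈i_2,j_2⌉⋯⌈i_p,j_p⌉` where `⌈i,j⌉ = σ_i σ_{i+1} ⋯ σ_j`. -/
def nfWord (L : List (ℕ × ℕ)) : List ℕ :=
  (L.map (fun p => List.Ico p.1 (p.2 + 1))).flatten

/-- `A_n^j`: fully commutative elements whose normal form ends with `σ_j`, i.e. `j_p = j`. -/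
def Anj (n j : ℕ) : Set (Equiv.Perm (Fin (n+1))) :=
  {g | ∃ L : List (ℕ × ℕ), NFData n L ∧ wprod n (nfWord L) = g ∧
       ∃ h : L ≠ [], (L.getLast h).2 = j}

/-- `a_n^j(q) = ∑_{w ∈ A_n^j} q^{l(w)}`. -/
noncomputable def anj (n j : ℕ) : Polynomial ℤ :=
  ∑ g ∈ (Set.toFinite (Anj n j)).toFinset, X ^ len n g

/-- The Poincaré polynomial `a_n(q) = ∑_{w ∈ W^c(A_n)} q^{l(w)}`. -/
noncomputable def apoly (n : ℕ) : Polynomial ℤ :=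
  ∑ g ∈ (Set.toFinite {g : Equiv.Perm (Fin (n+1)) | FC n g}).toFinset, X ^ len n g

/-- The defining conditions for the family `B_j^k`, `1 ≤ k ≤ j`. -/
def Bfam (B : ℕ → ℕ → Polynomial ℤ) : Prop :=
  (∀ j, 1 ≤ j → B j 1 = 1) ∧
  (∀ j, 2 ≤ j → B j j = ∏ t ∈ Finset.Icc 2 j, (1 - X ^ t)) ∧
  (∀ j k, 2 ≤ k → k ≤ j - 1 →
    B j k = B (j-1) k + (1 - X ^ j) * B (j-1) (k-1) - B (j-2) (k-1))

/-- The defining conditions for the family `b_j^k = B_j^{j-k+1}`, `1 ≤ k ≤ j`. -/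
def bfam (b : ℕ → ℕ → Polynomial ℤ) : Prop :=
  (∀ j, 1 ≤ j → b j j = 1) ∧
  (∀ j, 2 ≤ j → b j 1 = ∏ t ∈ Finset.Icc 2 j, (1 - X ^ t)) ∧
  (∀ j k, 2 ≤ k → k ≤ j - 1 →
    b j k = b (j-1) (k-1) + (1 - X ^ j) * b (j-1) k - b (j-2) (k-1))

/-- `ψ(k) = q^2 + ⋯ + q^{k+1}`. -/
noncomputable def psi (k : ℕ) : Polynomial ℤ := ∑ t ∈ Finset.Icc 2 (k+1), X ^ t

/-- `Π(u,v) = ∏_{t=u}^{v} (1 - q^t)` (empty product `1` if `u > v`). -/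
noncomputable def PiPoly (u v : ℕ) : Polynomial ℤ := ∏ t ∈ Finset.Icc u v, (1 - X ^ t)

/-- `ΣΠ(a,b)[l_1, …, l_u]`: the sum over all `(i_1, …, i_u)` with `a ≤ i_1`,
`i_t + l_t ≤ i_{t+1}`, `i_u + l_u - 1 ≤ b`, of `Π(a,b)` where for each `t` the
consecutive factors `(1-q^{i_t})⋯(1-q^{i_t+l_t-1})` are replaced by `-q^{i_t}`. -/
noncomputable def SigmaPi : ℕ → ℕ → List ℕ → Polynomial ℤ
  | a, b, [] => PiPoly a b
  | a, b, l :: ls => ∑ i ∈ Finset.Icc a (b + 1 - (l + ls.sum)),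
      PiPoly a (i-1) * (-X ^ i) * SigmaPi (i + l) b ls

/-- The polynomials `b(j,k,t)` of Theorem 3.3. -/
noncomputable def bjkt (j k t : ℕ) : Polynomial ℤ :=
  if t = k then PiPoly (k+2) j
  else ∑ u ∈ Finset.Icc 1 (min (j-k-1) (k-t)),
    ∑ c ∈ Finset.univ.filter (fun c : Composition (k-t) => c.length = u),
      SigmaPi (t+2) j (c.blocks.map (· + 1))

/-- The product `∏ b_{v_u}^{v_{u+1}}` along a chain `[v_0, v_1, …]`. -/
def chainProd {A : Type*} [CommRing A] (b : ℕ → ℕ → A) : List ℕ → A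
  | [] => 1
  | [_] => 1
  | x :: y :: rest => b x y * chainProd b (y :: rest)

/-- The sum over all strictly decreasing chains `n = v_0 > v_1 > ⋯ > v_s > v_{s+1} = i`
of `∏_{u=0}^{s} b_{v_u}^{v_{u+1}}`; the `s` interior vertices are encoded as an
`s`-element subset of `Ioo i n`, listed in decreasing order. -/
noncomputable def chainSum {A : Type*} [CommRing A] (b : ℕ → ℕ → A) (n i s : ℕ) : A :=
  ∑ T ∈ Finset.powersetCard s (Finset.Ioo i n),
    chainProd b (n :: ((T.sort (· ≤ ·)).reverse ++ [i]))



namespace StemAux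

/-- ℕ-side generator. -/
def s (k : ℕ) : Equiv.Perm ℕ := Equiv.swap (k-1) k

/-- ℕ-side word product. -/
def P (w : List ℕ) : Equiv.Perm ℕ := (w.map s).prod

@[simp] lemma P_nil : P [] = 1 := rfl

@[simp] lemma P_cons (k : ℕ) (w : List ℕ) : P (k :: w) = s k * P w := by
  simp [P]

lemma P_append (a b : List ℕ) : P (a ++ b) = P a * P b := by
  simp [P]

@[simp] lemma P_singleton (k : ℕ) : P [k] = s k := by simp

lemma s_mul_self (k : ℕ) : s k * s k = 1 := by
  simp [s]

lemma s_apply (k x : ℕ) : s k x = if x = k - 1 then k else if x = k then k - 1 else x := by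
  simp [s, Equiv.swap_apply_def]

lemma s_apply_of_ne (k x : ℕ) (h1 : x ≠ k - 1) (h2 : x ≠ k) : s k x = x := by
  simp [s_apply, h1, h2]

set_option maxHeartbeats 1000000 in
lemma s_comm {k l : ℕ} (h : k + 2 ≤ l ∨ l + 2 ≤ k) : s k * s l = s l * s k := by
  have hd : ∀ k l : ℕ, k + 2 ≤ l → s k * s l = s l * s k := by
    intro k l h
    ext x
    have h1 : k ≠ l - 1 := by omega
    have h2 : k ≠ l := by omega
    have h3 : k - 1 ≠ l - 1 := by omega
    have h4 : k - 1 ≠ l := by omega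
    simp only [Equiv.Perm.mul_apply, s_apply]
    split_ifs <;> omega
  rcases h with h | h
  · exact hd k l h
  · exact (hd l k h).symm

set_option maxHeartbeats 1000000 in
lemma s_braid {k : ℕ} (hk : 1 ≤ k) : s k * s (k+1) * s k = s (k+1) * s k * s (k+1) := by
  ext x
  have e1 : k + 1 - 1 = k := rfl
  simp only [Equiv.Perm.mul_apply, s_apply, e1]
  split_ifs <;> omega

/-- braid element squared is 1. -/
lemma braid_sq (k : ℕ) : (s k * s (k+1) * s k) * (s k * s (k+1) * s k) = 1 := by
  have : s k * s (k+1) * s k * (s k * s (k+1) * s k)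
      = s k * s (k+1) * (s k * s k) * s (k+1) * s k := by group
  rw [this, s_mul_self, mul_one, mul_assoc (s k), s_mul_self, mul_one, s_mul_self]

/-- A word whose letters all differ by ≥2 from k commutes with `s k`. -/
lemma P_comm_s {w : List ℕ} {k : ℕ} (h : ∀ l ∈ w, l + 2 ≤ k ∨ k + 2 ≤ l) :
    P w * s k = s k * P w := by
  induction w with
  | nil => simp
  | cons a t ih =>
    have ha := h a (by simp)
    have ht := ih (fun l hl => h l (by simp [hl]))
    rw [P_cons, mul_assoc, ht, ← mul_assoc, s_comm (by tauto), mul_assoc]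

/-- letters ≤ m ⇒ product fixes points > m. -/
lemma P_fix {w : List ℕ} {m : ℕ} (h : ∀ l ∈ w, l ≤ m) {x : ℕ} (hx : m < x) :
    P w x = x := by
  induction w with
  | nil => simp
  | cons a t ih =>
    have ha := h a (by simp)
    have ht := ih (fun l hl => h l (by simp [hl]))
    rw [P_cons, Equiv.Perm.mul_apply, ht, s_apply_of_ne] <;> omega

end StemAux

namespace StemAux
open Finset

/-- fixes everything above n -/
def Fix (n : ℕ) (g : Equiv.Perm ℕ) : Prop := ∀ x, n < x → g x = x

lemma Fix.le {n : ℕ} {g : Equiv.Perm ℕ} (hf : Fix n g) {x : ℕ} (hx : x ≤ n) : g x ≤ n := by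
  by_contra h
  push_neg at h
  have := hf _ h
  have := g.injective this
  omega

lemma Fix.mul {n : ℕ} {g h : Equiv.Perm ℕ} (hg : Fix n g) (hh : Fix n h) : Fix n (g * h) := by
  intro x hx
  simp [Equiv.Perm.mul_apply, hh x hx, hg x hx]

lemma Fix.s {n k : ℕ} (hk : k ≤ n) : Fix n (s k) := by
  intro x hx
  exact s_apply_of_ne _ _ (by omega) (by omega)

/-- inversion set -/
def D (n : ℕ) (g : Equiv.Perm ℕ) : Finset (ℕ × ℕ) :=
  (range (n+1) ×ˢ range (n+1)).filter fun p => p.1 < p.2 ∧ g p.2 < g p.1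

/-- inversion number -/
def Ninv (n : ℕ) (g : Equiv.Perm ℕ) : ℕ := (D n g).card

@[simp] lemma Ninv_one (n : ℕ) : Ninv n 1 = 0 := by
  rw [Ninv, Finset.card_eq_zero, Finset.eq_empty_iff_forall_notMem]
  rintro ⟨x, y⟩ h
  simp only [D, Finset.mem_filter] at h
  simp only [Equiv.Perm.one_apply] at h
  omega

lemma s_lt {k x y : ℕ} (hk : 1 ≤ k) (hxy : x < y) (hne : ¬(x = k - 1 ∧ y = k)) :
    s k x < s k y := by
  simp only [s_apply]
  split_ifs <;> omega

lemma s_invol (k x : ℕ) : s k (s k x) = x := by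
  simp [s, Equiv.swap_apply_self]

lemma mem_D {n : ℕ} {g : Equiv.Perm ℕ} {p : ℕ × ℕ} :
    p ∈ D n g ↔ p.1 ≤ n ∧ p.2 ≤ n ∧ p.1 < p.2 ∧ g p.2 < g p.1 := by
  simp only [D, Finset.mem_filter, Finset.mem_product, Finset.mem_range]
  omega

lemma s_km1 {k : ℕ} (hk : 1 ≤ k) : s k (k-1) = k := by simp [s_apply]

lemma s_kk {k : ℕ} (hk : 1 ≤ k) : s k k = k - 1 := by
  rw [s_apply, if_neg (by omega), if_pos rfl]

/-- the key inversion-count lemma: ascent case. -/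
lemma Ninv_mul_s_ascent {n k : ℕ} {g : Equiv.Perm ℕ} (hk1 : 1 ≤ k) (hkn : k ≤ n)
    (ha : g (k-1) < g k) : Ninv n (g * s k) = Ninv n g + 1 := by
  classical
  have hsk1 := s_km1 hk1
  have hsk2 := s_kk hk1
  have hqmem : ((k-1, k) : ℕ × ℕ) ∈ D n (g * s k) := by
    rw [mem_D]
    refine ⟨by show k - 1 ≤ n; omega, by show k ≤ n; omega, by show k - 1 < k; omega, ?_⟩
    show (g * s k) k < (g * s k) (k-1)
    simpa only [Equiv.Perm.mul_apply, hsk1, hsk2] using ha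
  have hqnot : ((k-1, k) : ℕ × ℕ) ∉ D n g := by
    rw [mem_D]
    push_neg
    intro _ _ _
    show g (k-1) ≤ g k
    omega
  have key : ∀ (h : Equiv.Perm ℕ) (x y : ℕ), (x, y) ≠ ((k-1 : ℕ), k) → x ≤ n → y ≤ n → x < y →
      ((s k x, s k y) ∈ (D n h).erase (k-1, k) ↔ h (s k y) < h (s k x)) := by
    intro h x y hne h1 h2 h3
    have hne' : ¬(x = k - 1 ∧ y = k) := by
      rintro ⟨e1, e2⟩; exact hne (by rw [e1, e2])
    have hlt := s_lt hk1 h3 hne'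
    have hb1 : s k x ≤ n := by simp only [s_apply]; split_ifs <;> omega
    have hb2 : s k y ≤ n := by simp only [s_apply]; split_ifs <;> omega
    have hnot : ((s k x, s k y) : ℕ × ℕ) ≠ (k-1, k) := by
      intro hcon
      have e1 : s k x = k - 1 := congrArg Prod.fst hcon
      have e2 : s k y = k := congrArg Prod.snd hcon
      have h5 := s_invol k y
      rw [e2, hsk2] at h5
      have h6 := s_invol k x
      rw [e1, hsk1] at h6
      omega
    simp only [Finset.mem_erase, mem_D]
    constructor
    · rintro ⟨-, -, -, -, h4⟩; exact h4
    · intro h4; exact ⟨hnot, hb1, hb2, hlt, h4⟩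
  have hbij : ((D n (g * s k)).erase (k-1, k)).card = ((D n g).erase (k-1, k)).card := by
    apply Finset.card_bij' (fun p _ => (s k p.1, s k p.2)) (fun p _ => (s k p.1, s k p.2))
    · rintro ⟨x, y⟩ hp
      simp only [Finset.mem_erase, mem_D] at hp
      obtain ⟨hne, h1, h2, h3, h4⟩ := hp
      exact (key g x y hne h1 h2 h3).mpr (by simpa only [Equiv.Perm.mul_apply] using h4)
    · rintro ⟨x, y⟩ hp
      simp only [Finset.mem_erase, mem_D] at hp
      obtain ⟨hne, h1, h2, h3, h4⟩ := hp
      exact (key (g * s k) x y hne h1 h2 h3).mpr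
        (by simp only [Equiv.Perm.mul_apply, s_invol]; exact h4)
    · rintro ⟨x, y⟩ _; simp [s_invol]
    · rintro ⟨x, y⟩ _; simp [s_invol]
  have e1 : Ninv n (g * s k) = ((D n (g * s k)).erase (k-1, k)).card + 1 := by
    rw [Ninv, ← Finset.card_erase_add_one hqmem]
  have e2 : ((D n g).erase (k-1, k)).card = Ninv n g := by
    rw [Ninv, Finset.erase_eq_of_notMem hqnot]
  omega

lemma Ninv_mul_s_descent {n k : ℕ} {g : Equiv.Perm ℕ} (hk1 : 1 ≤ k) (hkn : k ≤ n)
    (hd : g k < g (k-1)) : Ninv n (g * s k) + 1 = Ninv n g := by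
  have ha : (g * s k) (k - 1) < (g * s k) k := by
    simp only [Equiv.Perm.mul_apply, s_km1 hk1, s_kk hk1]; exact hd
  have h2 := Ninv_mul_s_ascent hk1 hkn ha
  have e : g * s k * s k = g := by rw [mul_assoc, s_mul_self, mul_one]
  rw [e] at h2
  omega


lemma Ninv_le_length {n : ℕ} (w : List ℕ) (hw : ∀ l ∈ w, 1 ≤ l ∧ l ≤ n) :
    Ninv n (P w) ≤ w.length := by
  induction w using List.reverseRecOn with
  | nil => simp
  | append_singleton u k ih =>
    have hk := hw k (by simp)
    have hu : ∀ l ∈ u, 1 ≤ l ∧ l ≤ n := fun l hl => hw l (by simp [hl])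
    have ih' := ih hu
    rw [P_append, P_singleton, List.length_append, List.length_singleton]
    set g := P u with hg
    rcases lt_trichotomy (g (k-1)) (g k) with h | h | h
    · rw [Ninv_mul_s_ascent hk.1 hk.2 h]; omega
    · exact absurd (g.injective h) (by omega)
    · have := Ninv_mul_s_descent hk.1 hk.2 h; omega

lemma exists_descent {n : ℕ} {g : Equiv.Perm ℕ} (hf : Fix n g) (hg : g ≠ 1) :
    ∃ k, 1 ≤ k ∧ k ≤ n ∧ g k < g (k-1) := by
  by_contra hcon
  push_neg at hcon
  have mono : ∀ k, 1 ≤ k → k ≤ n → g (k-1) < g k := by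
    intro k h1 h2
    refine lt_of_le_of_ne (hcon k h1 h2) (fun he => ?_)
    have := g.injective he
    omega
  have up : ∀ x, x ≤ n → x ≤ g x := by
    intro x
    induction x with
    | zero => omega
    | succ y ih =>
      intro hy
      have h1 := ih (by omega)
      have h2 := mono (y+1) (by omega) hy
      simp only [Nat.add_sub_cancel] at h2
      omega
  have down : ∀ d x, x ≤ n → n - d ≤ x → g x = x := by
    intro d
    induction d with
    | zero =>
      intro x h1 h2
      have hx : x = n := by omega
      have h3 := hf.le h1
      have h4 := up x h1
      omega
    | succ d ih =>
      intro x h1 h2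
      rcases le_or_gt (n - d) x with h | h
      · exact ih x h1 h
      · have hx1 : x + 1 ≤ n := by omega
        have e1 : g (x+1) = x+1 := ih (x+1) hx1 (by omega)
        have h3 := mono (x+1) (by omega) hx1
        simp only [Nat.add_sub_cancel] at h3
        have h4 := up x (by omega)
        omega
  apply hg
  ext x
  rcases le_or_gt x n with h | h
  · simpa using down n x h (by omega)
  · simpa using hf x h

lemma exists_word {n : ℕ} : ∀ (N : ℕ) (g : Equiv.Perm ℕ), Fix n g → Ninv n g = N →
    ∃ w, (∀ l ∈ w, 1 ≤ l ∧ l ≤ n) ∧ P w = g ∧ w.length = Ninv n g := by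
  intro N
  induction N using Nat.strong_induction_on with
  | _ N ih =>
    intro g hf hN
    rcases eq_or_ne g 1 with rfl | hg
    · exact ⟨[], by simp, by simp, by simp⟩
    · obtain ⟨k, hk1, hkn, hd⟩ := exists_descent hf hg
      have hdec := Ninv_mul_s_descent hk1 hkn hd
      have hf' : Fix n (g * s k) := hf.mul (Fix.s hkn)
      obtain ⟨w', hw'1, hw'2, hw'3⟩ := ih (Ninv n (g * s k)) (by omega) (g * s k) hf' rfl
      refine ⟨w' ++ [k], ?_, ?_, ?_⟩
      · intro l hl
        rcases List.mem_append.1 hl with h | h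
        · exact hw'1 l h
        · simp at h; omega
      · rw [P_append, P_singleton, hw'2, mul_assoc, s_mul_self, mul_one]
      · rw [List.length_append, List.length_singleton]; omega


/-- explicit formula for the cycle word product -/
lemma C_apply : ∀ (d i j : ℕ), 1 ≤ i → i ≤ j → j - i = d → ∀ x,
    P (List.Ico i (j+1)) x = if x = j then i - 1 else if i - 1 ≤ x ∧ x < j then x + 1 else x := by
  intro d
  induction d with
  | zero =>
    intro i j hi hij hd x
    have : i = j := by omega
    subst this
    rw [List.Ico.succ_singleton, P_singleton, s_apply]
    split_ifs <;> omega
  | succ d ih =>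
    intro i j hi hij hd x
    have hlt : i < j := by omega
    rw [List.Ico.eq_cons (by omega), P_cons, Equiv.Perm.mul_apply,
      ih (i+1) j (by omega) (by omega) (by omega) x, s_apply]
    have e : i + 1 - 1 = i := by omega
    rw [e]
    split_ifs <;> omega

lemma C_apply' {i j : ℕ} (hi : 1 ≤ i) (hij : i ≤ j) (x : ℕ) :
    P (List.Ico i (j+1)) x = if x = j then i - 1 else if i - 1 ≤ x ∧ x < j then x + 1 else x :=
  C_apply (j - i) i j hi hij rfl x

lemma C_lt_C {i j a b : ℕ} (hi : 1 ≤ i) (hij : i ≤ j) (ha : a ≠ j) (hb : b ≠ j) :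
    P (List.Ico i (j+1)) a < P (List.Ico i (j+1)) b ↔ a < b := by
  rw [C_apply' hi hij, C_apply' hi hij]
  split_ifs <;> omega

lemma Ico_le {i j l : ℕ} (hl : l ∈ List.Ico i (j+1)) : l ≤ j := by
  rw [List.Ico.mem] at hl; omega

/-- inversion additivity for a top cycle -/
lemma Ninv_C_mul {n i j : ℕ} {h : Equiv.Perm ℕ} (hi : 1 ≤ i) (hij : i ≤ j) (hjn : j ≤ n)
    (hfix : ∀ x, j ≤ x → h x = x) :
    Ninv n (P (List.Ico i (j+1)) * h) = (j + 1 - i) + Ninv n h := by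
  classical
  set C := P (List.Ico i (j+1)) with hC
  have hmaps : ∀ x, x < j → h x < j := by
    intro x hx
    by_contra hcc
    push_neg at hcc
    have := hfix _ hcc
    have := h.injective this
    omega
  have hCj : C j = i - 1 := by rw [hC, C_apply' hi hij]; simp
  have hsplit : D n (C * h) = D n h ∪
      ((Finset.range j).filter (fun x => i - 1 ≤ h x)).image (fun x => (x, j)) := by
    ext ⟨x, y⟩
    simp only [mem_D, Finset.mem_union, Finset.mem_image, Finset.mem_filter, Finset.mem_range,
      Equiv.Perm.mul_apply]
    constructor
    · rintro ⟨h1, h2, h3, h4⟩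
      rcases eq_or_ne y j with rfl | hy
      · right
        refine ⟨x, ⟨h3, ?_⟩, rfl⟩
        rw [hfix y (le_refl y), hCj] at h4
        have hx' : h x < y := hmaps x h3
        rw [C_apply' hi hij (h x)] at h4
        by_contra hcc
        push_neg at hcc
        rw [if_neg (by omega), if_neg (by omega)] at h4
        omega
      · left
        rcases eq_or_ne x j with rfl | hx
        · exfalso
          rw [hfix x (le_refl x), hCj] at h4
          have hyy : h y = y := hfix y (by omega)
          rw [hyy, C_apply' hi hij y, if_neg (by omega), if_neg (by omega)] at h4
          omega
        · have hhx : h x ≠ j := fun e => hx (h.injective (e.trans (hfix j (le_refl j)).symm))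
          have hhy : h y ≠ j := fun e => hy (h.injective (e.trans (hfix j (le_refl j)).symm))
          exact ⟨h1, h2, h3, (C_lt_C hi hij hhy hhx).1 h4⟩
    · rintro (⟨h1, h2, h3, h4⟩ | ⟨x', ⟨hx1, hx2⟩, he⟩)
      · have hy : y ≠ j := by
          intro e
          rw [e, hfix j (le_refl j)] at h4
          have := hmaps x (by omega)
          omega
        have hx : x ≠ j := by
          intro e
          rw [e, hfix j (le_refl j)] at h4
          have h5 : j < y := e ▸ h3
          have h6 : h y = y := hfix y (by omega)
          omega
        have hhx : h x ≠ j := fun e => hx (h.injective (e.trans (hfix j (le_refl j)).symm))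
        have hhy : h y ≠ j := fun e => hy (h.injective (e.trans (hfix j (le_refl j)).symm))
        exact ⟨h1, h2, h3, (C_lt_C hi hij hhy hhx).2 h4⟩
      · injection he with e1 e2
        subst e1
        subst e2
        refine ⟨by omega, by omega, hx1, ?_⟩
        rw [hfix j (le_refl j), hCj, C_apply' hi hij (h x')]
        have := hmaps x' hx1
        rw [if_neg (by omega), if_pos (by omega)]
        omega
  have hdisj : Disjoint (D n h)
      (((Finset.range j).filter (fun x => i - 1 ≤ h x)).image (fun x => (x, j))) := by
    rw [Finset.disjoint_right]
    rintro ⟨x, y⟩ hmem hmem2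
    simp only [Finset.mem_image, Finset.mem_filter, Finset.mem_range] at hmem
    obtain ⟨x', ⟨hx1, hx2⟩, he⟩ := hmem
    injection he with e1 e2
    subst e1; subst e2
    rw [mem_D] at hmem2
    have := hmaps x' hx1
    have := hfix j (le_refl j)
    simp only at hmem2
    omega
  have hcard : (((Finset.range j).filter (fun x => i - 1 ≤ h x)).image (fun x => (x, j))).card
      = j + 1 - i := by
    rw [Finset.card_image_of_injective _ (fun a b e => (Prod.mk.injEq .. ▸ e).1)]
    have : ((Finset.range j).filter (fun x => i - 1 ≤ h x)).card
        = ((Finset.range j).filter (fun v => i - 1 ≤ v)).card := by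
      apply Finset.card_bij (fun x _ => h x)
      · intro a ha
        simp only [Finset.mem_filter, Finset.mem_range] at ha ⊢
        exact ⟨hmaps a ha.1, ha.2⟩
      · intro a ha b hb e
        exact h.injective e
      · intro v hv
        simp only [Finset.mem_filter, Finset.mem_range] at hv
        refine ⟨h.symm v, ?_, ?_⟩
        · simp only [Finset.mem_filter, Finset.mem_range]
          constructor
          · by_contra hc
            push_neg at hc
            have := hfix _ hc
            have : h (h.symm v) = h.symm v := this
            rw [Equiv.apply_symm_apply] at this
            omega
          · rw [Equiv.apply_symm_apply]; exact hv.2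
        · rw [Equiv.apply_symm_apply]
    rw [this]
    have : (Finset.range j).filter (fun v => i - 1 ≤ v) = Finset.Ico (i-1) j := by
      ext v
      simp only [Finset.mem_filter, Finset.mem_range, Finset.mem_Ico]
      omega
    rw [this, Nat.card_Ico]
    omega
  rw [Ninv, hsplit, Finset.card_union_of_disjoint hdisj, hcard, Ninv]
  omega


lemma nfw_cons (i j : ℕ) (L : List (ℕ × ℕ)) :
    nfWord ((i,j) :: L) = List.Ico i (j+1) ++ nfWord L := by
  simp [nfWord]

lemma ND_tail {n : ℕ} {q : ℕ × ℕ} {L : List (ℕ × ℕ)} (h : NFData n (q :: L)) : NFData n L := by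
  obtain ⟨h1, h2, h3⟩ := h
  exact ⟨by simpa using Nat.le_of_succ_le h1, h2.tail, fun p hp => h3 p (by simp [hp])⟩

lemma trans_rel : Transitive (fun a b : ℕ × ℕ => b.1 < a.1 ∧ b.2 < a.2) := by
  intro a b c h1 h2
  omega

lemma ND_head_forall {n i j : ℕ} {L : List (ℕ × ℕ)} (h : NFData n ((i,j) :: L)) :
    ∀ p ∈ L, p.1 < i ∧ p.2 < j := by
  obtain ⟨-, h2, -⟩ := h
  haveI : IsTrans (ℕ × ℕ) (fun a b => b.1 < a.1 ∧ b.2 < a.2) :=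
    ⟨fun a b c h1 h2 => by omega⟩
  rw [List.Chain', List.isChain_iff_pairwise] at h2
  intro p hp
  exact (List.pairwise_cons.1 h2).1 p hp

lemma nfw_letters {n : ℕ} {L : List (ℕ × ℕ)} (h : NFData n L) :
    ∀ l ∈ nfWord L, 1 ≤ l ∧ l ≤ n := by
  intro l hl
  simp only [nfWord, List.mem_flatten, List.mem_map] at hl
  obtain ⟨w, ⟨p, hp, rfl⟩, hlw⟩ := hl
  rw [List.Ico.mem] at hlw
  have := h.2.2 p hp
  omega

lemma nfw_le {m : ℕ} {L : List (ℕ × ℕ)} (h : ∀ p ∈ L, p.2 ≤ m) :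
    ∀ l ∈ nfWord L, l ≤ m := by
  intro l hl
  simp only [nfWord, List.mem_flatten, List.mem_map] at hl
  obtain ⟨w, ⟨p, hp, rfl⟩, hlw⟩ := hl
  rw [List.Ico.mem] at hlw
  have := h p hp
  omega

lemma P_nfw_fix {m : ℕ} {L : List (ℕ × ℕ)} (h : ∀ p ∈ L, p.2 ≤ m) {x : ℕ} (hx : m < x) :
    P (nfWord L) x = x :=
  P_fix (nfw_le h) hx

lemma nfw_length {L : List (ℕ × ℕ)} (h : ∀ p ∈ L, p.1 ≤ p.2) :
    (nfWord L).length = (L.map (fun p => p.2 + 1 - p.1)).sum := by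
  induction L with
  | nil => simp [nfWord]
  | cons q T ih =>
    obtain ⟨i, j⟩ := q
    rw [nfw_cons, List.length_append, List.Ico.length, ih (fun p hp => h p (by simp [hp]))]
    simp

lemma Ninv_nfw {n : ℕ} {L : List (ℕ × ℕ)} (h : NFData n L) :
    Ninv n (P (nfWord L)) = (nfWord L).length := by
  induction L with
  | nil => simp [nfWord]
  | cons q T ih =>
    obtain ⟨i, j⟩ := q
    have hb := h.2.2 (i, j) (by simp)
    simp only at hb
    have hT := ND_tail h
    have hdom := ND_head_forall h
    have hfix : ∀ x, j ≤ x → P (nfWord T) x = x := by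
      intro x hx
      exact P_nfw_fix (m := j - 1) (fun p hp => by have := hdom p hp; omega) (by omega)
    rw [nfw_cons, P_append, Ninv_C_mul hb.1 hb.2.1 hb.2.2 hfix, List.length_append,
      List.Ico.length, ih hT]

lemma P_nfw_top {n i j : ℕ} {L : List (ℕ × ℕ)} (h : NFData n ((i,j) :: L)) :
    P (nfWord ((i,j) :: L)) j = i - 1 := by
  have hb := h.2.2 (i, j) (by simp)
  simp only at hb
  have hdom := ND_head_forall h
  have hfix : P (nfWord L) j = j :=
    P_nfw_fix (m := j - 1) (fun p hp => by have := hdom p hp; omega) (by omega)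
  rw [nfw_cons, P_append, Equiv.Perm.mul_apply, hfix, C_apply' hb.1 hb.2.1]
  simp

lemma P_nfw_fix_top {n i j : ℕ} {L : List (ℕ × ℕ)} (h : NFData n ((i,j) :: L)) {x : ℕ}
    (hx : j < x) : P (nfWord ((i,j) :: L)) x = x := by
  have hdom := ND_head_forall h
  have hb := h.2.2 (i, j) (by simp)
  simp only at hb
  refine P_nfw_fix (m := j) ?_ hx
  rintro p hp
  rcases List.mem_cons.1 hp with rfl | hp'
  · simp
  · have := hdom p hp'
    omega

/-- uniqueness of the normal form -/
lemma nf_unique {n : ℕ} : ∀ (L L' : List (ℕ × ℕ)), NFData n L → NFData n L' →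
    P (nfWord L) = P (nfWord L') → L = L' := by
  have moved : ∀ (i j : ℕ) (L : List (ℕ × ℕ)), NFData n ((i,j)::L) →
      P (nfWord ((i,j)::L)) j ≠ j := by
    intro i j L h
    rw [P_nfw_top h]
    have hb := h.2.2 (i, j) (by simp)
    simp only at hb
    omega
  intro L
  induction L with
  | nil =>
    intro L' h h' he
    cases L' with
    | nil => rfl
    | cons q T =>
      obtain ⟨i, j⟩ := q
      exfalso
      apply moved i j T h'
      rw [← he]
      simp [nfWord]
  | cons q T ih =>
    intro L' h h' he
    obtain ⟨i, j⟩ := q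
    cases L' with
    | nil =>
      exfalso
      apply moved i j T h
      rw [he]
      simp [nfWord]
    | cons q' T' =>
      obtain ⟨i', j'⟩ := q'
      have hb := h.2.2 (i, j) (by simp)
      have hb' := h'.2.2 (i', j') (by simp)
      simp only at hb hb'
      have hjj : j = j' := by
        rcases lt_trichotomy j j' with hlt | heq | hlt
        · exfalso
          apply moved i' j' T' h'
          rw [← he]
          exact P_nfw_fix_top h hlt
        · exact heq
        · exfalso
          apply moved i j T h
          rw [he]
          exact P_nfw_fix_top h' hlt
      subst hjj
      have hii : i = i' := by
        have e1 := P_nfw_top h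
        have e2 := P_nfw_top h'
        rw [he, e2] at e1
        omega
      subst hii
      have hT : P (nfWord T) = P (nfWord T') := by
        rw [nfw_cons, nfw_cons, P_append, P_append] at he
        exact mul_left_cancel he
      rw [ih T' (ND_tail h) (ND_tail h') hT]


/-- non-special points don't decrease -/
lemma ge_of_not_special {n : ℕ} : ∀ (L : List (ℕ × ℕ)), NFData n L →
    ∀ x, x ∉ L.map Prod.snd → x ≤ P (nfWord L) x := by
  intro L
  induction L with
  | nil => intro _ x _; simp [nfWord]
  | cons q T ih =>
    intro h x hx
    obtain ⟨i, j⟩ := q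
    simp only [List.map_cons, List.mem_cons, not_or] at hx
    obtain ⟨hxj, hxT⟩ := hx
    have hb := h.2.2 (i, j) (by simp)
    simp only at hb
    have hdom := ND_head_forall h
    have h1 := ih (ND_tail h) x hxT
    have hgx : P (nfWord T) x ≠ j := by
      intro e
      have : P (nfWord T) j = j :=
        P_nfw_fix (m := j - 1) (fun p hp => by have := hdom p hp; omega) (by omega)
      exact hxj (Equiv.injective _ (e.trans this.symm))
    rw [nfw_cons, P_append, Equiv.Perm.mul_apply, C_apply' hb.1 hb.2.1, if_neg hgx]
    split_ifs <;> omega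

/-- strict monotonicity off the special points -/
lemma lt_of_not_special {n : ℕ} : ∀ (L : List (ℕ × ℕ)), NFData n L →
    ∀ x y, x < y → x ∉ L.map Prod.snd → y ∉ L.map Prod.snd →
    P (nfWord L) x < P (nfWord L) y := by
  intro L
  induction L with
  | nil => intro _ x y hxy _ _; simpa [nfWord] using hxy
  | cons q T ih =>
    intro h x y hxy hx hy
    obtain ⟨i, j⟩ := q
    simp only [List.map_cons, List.mem_cons, not_or] at hx hy
    have hb := h.2.2 (i, j) (by simp)
    simp only at hb
    have hdom := ND_head_forall h
    have hfixj : P (nfWord T) j = j :=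
      P_nfw_fix (m := j - 1) (fun p hp => by have := hdom p hp; omega) (by omega)
    have h1 := ih (ND_tail h) x y hxy hx.2 hy.2
    have hgx : P (nfWord T) x ≠ j := fun e => hx.1 (Equiv.injective _ (e.trans hfixj.symm))
    have hgy : P (nfWord T) y ≠ j := fun e => hy.1 (Equiv.injective _ (e.trans hfixj.symm))
    rw [nfw_cons, P_append, Equiv.Perm.mul_apply, Equiv.Perm.mul_apply]
    exact (C_lt_C hb.1 hb.2.1 hgx hgy).2 h1

/-- value at every special point -/
lemma P_nfw_snd {n : ℕ} : ∀ (L : List (ℕ × ℕ)), NFData n L →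
    ∀ p ∈ L, P (nfWord L) p.2 = p.1 - 1 := by
  intro L
  induction L with
  | nil => intro _ p hp; simp at hp
  | cons q T ih =>
    intro h p hp
    obtain ⟨i, j⟩ := q
    have hb := h.2.2 (i, j) (by simp)
    simp only at hb
    have hdom := ND_head_forall h
    rcases List.mem_cons.1 hp with rfl | hp'
    · exact P_nfw_top h
    · have h1 := ih (ND_tail h) p hp'
      have hp2 := (h.2.2 p hp)
      have hdomp := hdom p hp'
      rw [nfw_cons, P_append, Equiv.Perm.mul_apply, h1, C_apply' hb.1 hb.2.1,
        if_neg (by omega), if_neg (by omega)]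

/-- a descent must be the top of a block, and everything after that block is ≤ k-2 -/
lemma descent_split {n : ℕ} {L : List (ℕ × ℕ)} (h : NFData n L) {k : ℕ} (hk1 : 1 ≤ k)
    (hd : P (nfWord L) k < P (nfWord L) (k-1)) :
    ∃ A i B, L = A ++ (i, k) :: B ∧ (∀ p ∈ B, p.2 + 2 ≤ k) := by
  have hspec : k ∈ L.map Prod.snd := by
    by_contra hknot
    rcases Classical.em ((k-1) ∈ L.map Prod.snd) with hk1spec | hk1not
    · simp only [List.mem_map] at hk1spec
      obtain ⟨p, hp, hpe⟩ := hk1spec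
      have e1 : P (nfWord L) (k-1) = p.1 - 1 := by
        rw [← hpe]; exact P_nfw_snd L h p hp
      have hpb := h.2.2 p hp
      have e2 := ge_of_not_special L h k hknot
      omega
    · have := lt_of_not_special L h (k-1) k (by omega) hk1not hknot
      omega
  simp only [List.mem_map] at hspec
  obtain ⟨p, hp, hpe⟩ := hspec
  obtain ⟨A, B, hAB⟩ := List.append_of_mem hp
  obtain ⟨i, j⟩ := p
  simp only at hpe
  subst hpe
  refine ⟨A, i, B, hAB, ?_⟩
  -- everything in B is below (i,j)
  haveI : IsTrans (ℕ × ℕ) (fun a b => b.1 < a.1 ∧ b.2 < a.2) :=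
    ⟨fun a b c h1 h2 => by omega⟩
  have hchain := h.2.1
  rw [hAB, List.Chain', List.isChain_iff_pairwise] at hchain
  have hpw : List.Pairwise (fun a b : ℕ × ℕ => b.1 < a.1 ∧ b.2 < a.2) ((i,j) :: B) :=
    hchain.sublist (List.sublist_append_right A _)
  have hBrel : ∀ p' ∈ B, p'.1 < i ∧ p'.2 < j := (List.pairwise_cons.1 hpw).1
  intro p' hp'
  by_contra hcc
  have hp'2 : p'.2 = j - 1 := by have := hBrel p' hp'; omega
  have e1 : P (nfWord L) (j - 1) = p'.1 - 1 := by
    rw [← hp'2]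
    exact P_nfw_snd L h p' (by rw [hAB]; simp [hp'])
  have e2 : P (nfWord L) j = i - 1 := by
    have := P_nfw_snd L h (i, j) (by rw [hAB]; simp)
    simpa using this
  have := hBrel p' hp'
  have hib : 1 ≤ i := (h.2.2 (i,j) (by rw [hAB]; simp)).1
  omega


lemma CommMove.left {u u' : List ℕ} (x : List ℕ) (h : CommMove u u') :
    CommMove (x ++ u) (x ++ u') := by
  obtain ⟨a, b, i, j, hij⟩ := h
  rw [← List.append_assoc, ← List.append_assoc]
  exact CommMove.swap (x ++ a) b i j hij

lemma CommMove.right {u u' : List ℕ} (y : List ℕ) (h : CommMove u u') :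
    CommMove (u ++ y) (u' ++ y) := by
  obtain ⟨a, b, i, j, hij⟩ := h
  rw [List.append_assoc, List.cons_append, List.cons_append,
    List.append_assoc, List.cons_append, List.cons_append]
  exact CommMove.swap a (b ++ y) i j hij

lemma RTG_left {u u' : List ℕ} (x : List ℕ)
    (h : Relation.ReflTransGen CommMove u u') :
    Relation.ReflTransGen CommMove (x ++ u) (x ++ u') :=
  Relation.ReflTransGen.lift (fun l => x ++ l) (fun _ _ hc => CommMove.left x hc) _ _ h

lemma RTG_right {u u' : List ℕ} (y : List ℕ)
    (h : Relation.ReflTransGen CommMove u u') :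
    Relation.ReflTransGen CommMove (u ++ y) (u' ++ y) :=
  Relation.ReflTransGen.lift (fun l => l ++ y) (fun _ _ hc => CommMove.right y hc) _ _ h

lemma commMove_symm {u u' : List ℕ} (h : CommMove u u') : CommMove u' u := by
  obtain ⟨a, b, i, j, hij⟩ := h
  exact CommMove.swap a b j i (Or.symm hij)

lemma RTG_symm {u u' : List ℕ} (h : Relation.ReflTransGen CommMove u u') :
    Relation.ReflTransGen CommMove u' u := by
  induction h with
  | refl => exact Relation.ReflTransGen.refl
  | tail _ hc ih => exact Relation.ReflTransGen.head (commMove_symm hc) ih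

/-- a letter far from everything in `b` can move from the back to the front -/
lemma move_front {k : ℕ} : ∀ (b : List ℕ), (∀ l ∈ b, l + 2 ≤ k ∨ k + 2 ≤ l) →
    Relation.ReflTransGen CommMove (b ++ [k]) (k :: b) := by
  intro b
  induction b with
  | nil => exact fun _ => Relation.ReflTransGen.refl
  | cons a t ih =>
    intro hb
    have h1 : Relation.ReflTransGen CommMove (a :: (t ++ [k])) (a :: (k :: t)) :=
      RTG_left [a] (ih (fun l hl => hb l (by simp [hl])))
    refine Relation.ReflTransGen.tail h1 ?_
    have := CommMove.swap [] t a k (by have := hb a (by simp); tauto)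
    simpa using this

lemma nfw_append (X Y : List (ℕ × ℕ)) : nfWord (X ++ Y) = nfWord X ++ nfWord Y := by
  simp [nfWord]

/-- removal of a descent from a normal form -/
lemma descent_remove {n i k : ℕ} {A B : List (ℕ × ℕ)}
    (h : NFData n (A ++ (i,k) :: B)) (hB : ∀ p ∈ B, p.2 + 2 ≤ k) :
    ∃ L' : List (ℕ × ℕ), NFData n L' ∧
      P (nfWord (A ++ (i,k) :: B)) * s k = P (nfWord L') ∧
      Relation.ReflTransGen CommMove (nfWord L' ++ [k]) (nfWord (A ++ (i,k) :: B)) := by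
  classical
  have hb := h.2.2 (i,k) (by simp)
  simp only at hb
  haveI : IsTrans (ℕ × ℕ) (fun a b : ℕ × ℕ => b.1 < a.1 ∧ b.2 < a.2) :=
    ⟨fun a b c h1 h2 => by omega⟩
  have hchain := h.2.1
  rw [List.Chain', List.isChain_iff_pairwise] at hchain
  set opt : List (ℕ × ℕ) := if i = k then [] else [(i, k-1)] with hopt
  refine ⟨A ++ opt ++ B, ?_, ?_, ?_⟩
  · -- NFData
    refine ⟨?_, ?_, ?_⟩
    · have : (A ++ opt ++ B).length ≤ (A ++ (i,k) :: B).length := by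
        simp only [List.length_append, List.length_cons, hopt]
        split_ifs <;> simp <;> omega
      exact le_trans this h.1
    · rw [List.Chain', List.isChain_iff_pairwise]
      rw [List.pairwise_append] at hchain ⊢
      obtain ⟨hA, hcons, hcross⟩ := hchain
      rw [List.pairwise_cons] at hcons
      obtain ⟨hheadB, hBpw⟩ := hcons
      refine ⟨?_, ?_, ?_⟩
      · rw [List.pairwise_append]
        refine ⟨hA, ?_, ?_⟩
        · rw [hopt]
          split_ifs with hik <;> simp
        · intro a ha b hbm
          rw [hopt] at hbm
          split_ifs at hbm with hik
          · simp at hbm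
          · simp only [List.mem_singleton] at hbm
            subst hbm
            have := hcross a ha (i, k) (by simp)
            simp only at this ⊢
            omega
      · exact hBpw
      · intro a ha p' hp'
        rcases List.mem_append.1 ha with haA | haopt
        · exact hcross a haA p' (by simp [hp'])
        · rw [hopt] at haopt
          split_ifs at haopt with hik
          · simp at haopt
          · simp only [List.mem_singleton] at haopt
            subst haopt
            have h1 := hheadB p' hp'
            have h2 := hB p' hp'
            simp only at h1 ⊢
            omega
    · intro p hp
      rcases List.mem_append.1 hp with hp1 | hpB
      · rcases List.mem_append.1 hp1 with hpA | hpopt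
        · exact h.2.2 p (by simp [hpA])
        · rw [hopt] at hpopt
          split_ifs at hpopt with hik
          · simp at hpopt
          · simp only [List.mem_singleton] at hpopt
            subst hpopt
            simp only
            omega
      · exact h.2.2 p (by simp [hpB])
  · -- product
    have hBle : ∀ l ∈ nfWord B, l + 2 ≤ k := by
      intro l hl
      simp only [nfWord, List.mem_flatten, List.mem_map] at hl
      obtain ⟨w, ⟨p, hp, rfl⟩, hlw⟩ := hl
      rw [List.Ico.mem] at hlw
      have := hB p hp
      omega
    have hcomm : P (nfWord B) * s k = s k * P (nfWord B) :=
      P_comm_s (fun l hl => Or.inl (hBle l hl))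
    have hIco : List.Ico i (k+1) = List.Ico i k ++ [k] := List.Ico.succ_top hb.2.1
    have hoptw : nfWord opt = List.Ico i k := by
      rw [hopt]
      split_ifs with hik
      · have he : List.Ico i k = [] := List.Ico.eq_nil_of_le (by omega)
        simp [nfWord, he]
      · have : k - 1 + 1 = k := by omega
        simp [nfWord, this]
    rw [nfw_append, nfw_append, nfw_append, nfw_cons]
    rw [P_append, P_append, P_append, P_append, hoptw]
    rw [hIco, P_append, P_singleton]
    calc P (nfWord A) * (P (List.Ico i k) * s k) * P (nfWord B) * s k
        = P (nfWord A) * (P (List.Ico i k) * s k) * (P (nfWord B) * s k) := by group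
      _ = P (nfWord A) * (P (List.Ico i k) * s k) * (s k * P (nfWord B)) := by rw [hcomm]
      _ = P (nfWord A) * (P (List.Ico i k) * (s k * s k)) * P (nfWord B) := by group
      _ = P (nfWord A) * P (List.Ico i k) * P (nfWord B) := by rw [s_mul_self, mul_one]
  · -- commutation moves
    have hIco : List.Ico i (k+1) = List.Ico i k ++ [k] := List.Ico.succ_top hb.2.1
    have hoptw : nfWord opt = List.Ico i k := by
      rw [hopt]
      split_ifs with hik
      · have he : List.Ico i k = [] := List.Ico.eq_nil_of_le (by omega)
        simp [nfWord, he]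
      · have : k - 1 + 1 = k := by omega
        simp [nfWord, this]
    have hBle : ∀ l ∈ nfWord B, l + 2 ≤ k := by
      intro l hl
      simp only [nfWord, List.mem_flatten, List.mem_map] at hl
      obtain ⟨w, ⟨p, hp, rfl⟩, hlw⟩ := hl
      rw [List.Ico.mem] at hlw
      have := hB p hp
      omega
    have hmv : Relation.ReflTransGen CommMove (nfWord B ++ [k]) (k :: nfWord B) :=
      move_front (nfWord B) (fun l hl => Or.inl (hBle l hl))
    have step1 : Relation.ReflTransGen CommMove
        ((nfWord A ++ List.Ico i k) ++ (nfWord B ++ [k]))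
        ((nfWord A ++ List.Ico i k) ++ (k :: nfWord B)) := RTG_left _ hmv
    have e1 : nfWord (A ++ opt ++ B) ++ [k]
        = (nfWord A ++ List.Ico i k) ++ (nfWord B ++ [k]) := by
      rw [nfw_append, nfw_append, hoptw]
      simp [List.append_assoc]
    have e2 : nfWord (A ++ (i,k) :: B)
        = (nfWord A ++ List.Ico i k) ++ (k :: nfWord B) := by
      rw [nfw_append, nfw_cons, hIco]
      simp [List.append_assoc]
    rw [e1, e2]
    exact step1


/-- every reduced word (length = inversion count) for a normal-form element is
commutation-equivalent to the normal-form word. -/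
lemma words_to_nf {n : ℕ} : ∀ (N : ℕ) (L : List (ℕ × ℕ)) (w : List ℕ), NFData n L →
    (∀ l ∈ w, 1 ≤ l ∧ l ≤ n) → P w = P (nfWord L) → w.length = N →
    N = Ninv n (P w) →
    Relation.ReflTransGen CommMove w (nfWord L) := by
  intro N
  induction N using Nat.strong_induction_on with
  | _ N ih =>
    intro L w hL hw hP hlen hred
    rcases w.eq_nil_or_concat' with rfl | ⟨u, k, rfl⟩
    · have h0 : (nfWord L).length = 0 := by
        have h1 := Ninv_nfw hL
        rw [← hP] at h1
        simp only [P_nil, Ninv_one] at h1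
        omega
      rw [List.length_eq_zero_iff] at h0
      rw [h0]
    · have hk := hw k (by simp)
      have hu : ∀ l ∈ u, 1 ≤ l ∧ l ≤ n := fun l hl => hw l (by simp [hl])
      set g := P (u ++ [k]) with hg
      have hPu : P u = g * s k := by
        rw [hg, P_append, P_singleton, mul_assoc, s_mul_self, mul_one]
      have hlow : Ninv n (P u) ≤ u.length := Ninv_le_length u hu
      have hlen' : (u ++ [k]).length = u.length + 1 := by simp
      have hdesc : g k < g (k-1) := by
        rcases lt_trichotomy (g (k-1)) (g k) with hlt | heq | hlt
        · exfalso
          have := Ninv_mul_s_ascent hk.1 hk.2 hlt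
          rw [← hPu] at this
          omega
        · exact absurd (Equiv.injective g heq) (by omega)
        · exact hlt
      have hdN := Ninv_mul_s_descent hk.1 hk.2 hdesc
      rw [← hPu] at hdN
      -- descent of the normal form element
      have hdesc' : P (nfWord L) k < P (nfWord L) (k-1) := by rw [← hP]; exact hdesc
      obtain ⟨A, i, B, rfl, hB⟩ := descent_split hL hk.1 hdesc'
      obtain ⟨L', hL', hPL', hmoves⟩ := descent_remove hL hB
      have hPuL' : P u = P (nfWord L') := by
        rw [hPu, hP, hPL']
      have hulen : u.length = N - 1 := by omega
      have hured : N - 1 = Ninv n (P u) := by omega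
      have hN1 : N - 1 < N := by
        have : 1 ≤ N := by omega
        omega
      have hstep := ih (N-1) hN1 L' u hL' hu hPuL' hulen hured
      refine Relation.ReflTransGen.trans (RTG_right [k] hstep) hmoves


def Has321 (g : Equiv.Perm ℕ) : Prop :=
  ∃ x y z, x < y ∧ y < z ∧ g z < g y ∧ g y < g x

/-- the `{k, k+1}` filter is invariant under commutation moves -/
lemma filter_comm_invariant {k : ℕ} {w w' : List ℕ} (h : CommMove w w') :
    w.filter (fun l => l == k || l == (k+1)) = w'.filter (fun l => l == k || l == (k+1)) := by
  obtain ⟨a, b, i, j, hij⟩ := h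
  simp only [List.filter_append, List.filter_cons]
  have : ¬((i == k || i == (k+1)) = true ∧ (j == k || j == (k+1)) = true) := by
    simp only [List.cons.injEq, Bool.or_eq_true, beq_iff_eq]
    omega
  rcases Bool.eq_false_or_eq_true (i == k || i == (k+1)) with hi | hi <;>
    rcases Bool.eq_false_or_eq_true (j == k || j == (k+1)) with hj | hj <;>
    simp [hi, hj] at this ⊢

lemma filter_rtg_invariant {k : ℕ} {w w' : List ℕ}
    (h : Relation.ReflTransGen CommMove w w') :
    w.filter (fun l => l == k || l == (k+1)) = w'.filter (fun l => l == k || l == (k+1)) := by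
  induction h with
  | refl => rfl
  | tail _ hc ih => exact ih.trans (filter_comm_invariant hc)

lemma not_rtg_braid (a b : List ℕ) (k : ℕ) :
    ¬ Relation.ReflTransGen CommMove (a ++ [k, k+1, k] ++ b) (a ++ [k+1, k, k+1] ++ b) := by
  intro h
  have := filter_rtg_invariant (k := k) h
  simp only [List.filter_append] at this
  rw [List.append_assoc, List.append_assoc] at this
  have h2 := List.append_cancel_left this
  have h3 := List.append_cancel_right h2
  have : k = k + 1 := by
    have : List.filter (fun l => l == k || l == (k+1)) [k, k+1, k]
        = [k, k+1, k] := by simp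
    have e2 : List.filter (fun l => l == k || l == (k+1)) [k+1, k, k+1]
        = [k+1, k, k+1] := by simp
    rw [this, e2] at h3
    exact (List.cons.injEq .. ▸ h3).1
  omega

/-- if no descent strictly inside `(a, b]`, then `g a ≤ g b`. -/
lemma mono_of_no_descent {g : Equiv.Perm ℕ} {a : ℕ} : ∀ b, a ≤ b →
    (∀ m, a < m → m ≤ b → g (m-1) ≤ g m) → g a ≤ g b := by
  intro b hab
  induction b, hab using Nat.le_induction with
  | base => intro _; exact le_refl _
  | succ b hab ih =>
    intro hnd
    have h1 := ih (fun m hm1 hm2 => hnd m hm1 (by omega))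
    have h2 := hnd (b+1) (by omega) (by omega)
    simp only [Nat.add_sub_cancel] at h2
    exact le_trans h1 h2

/-- find a descent inside an interval witnessing an inversion -/
lemma exists_descent_interval {g : Equiv.Perm ℕ} {a b : ℕ} (hab : a < b)
    (hgab : g b < g a) : ∃ k, a < k ∧ k ≤ b ∧ g k < g (k-1) := by
  by_contra hcon
  push_neg at hcon
  have := mono_of_no_descent b (by omega) (fun m h1 h2 => hcon m h1 h2)
  omega


lemma mul_s_apply (g : Equiv.Perm ℕ) (k t : ℕ) : (g * s k) t = g (s k t) := rfl

lemma braid_word {n : ℕ} : ∀ (N : ℕ) (g : Equiv.Perm ℕ), Fix n g → Ninv n g = N → Has321 g →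
    ∃ a b k, 1 ≤ k ∧ k + 1 ≤ n ∧
      (∀ l ∈ a ++ [k, k+1, k] ++ b, 1 ≤ l ∧ l ≤ n) ∧
      P (a ++ [k, k+1, k] ++ b) = g ∧
      (a ++ [k, k+1, k] ++ b).length = Ninv n g := by
  intro N
  induction N using Nat.strong_induction_on with
  | _ N ih =>
    intro g hf hN hpat
    obtain ⟨x, y, z, hxy, hyz, h1, h2⟩ := hpat
    have hzn : z ≤ n := by
      by_contra hc
      push_neg at hc
      have hgz : g z = z := hf z hc
      have hyn : y ≤ n := by
        by_contra hc2
        push_neg at hc2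
        have : g y = y := hf y hc2
        omega
      have := hf.le hyn
      omega
    have hyn : y ≤ n := by omega
    by_cases hcons : ∃ k, 1 ≤ k ∧ k + 1 ≤ n ∧ g k < g (k-1) ∧ g (k+1) < g k
    · obtain ⟨k, hk1, hk2, hd1, hd2⟩ := hcons
      have e1 : Ninv n (g * s k) + 1 = Ninv n g := Ninv_mul_s_descent hk1 (by omega) hd1
      have hski : s k (k+1) = k + 1 := s_apply_of_ne _ _ (by omega) (by omega)
      have hg1k : (g * s k) k = g (k-1) := by rw [mul_s_apply, s_kk hk1]
      have hg1k1 : (g * s k) (k+1) = g (k+1) := by rw [mul_s_apply, hski]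
      have hd2' : (g * s k) (k+1) < (g * s k) ((k+1)-1) := by
        simp only [Nat.add_sub_cancel]
        rw [hg1k, hg1k1]
        omega
      have e2 : Ninv n (g * s k * s (k+1)) + 1 = Ninv n (g * s k) :=
        Ninv_mul_s_descent (by omega) hk2 hd2'
      have hsk1k : s (k+1) k = k + 1 := by
        have := s_km1 (k := k+1) (by omega)
        simpa using this
      have hsk1km1 : s (k+1) (k-1) = k - 1 := s_apply_of_ne _ _ (by omega) (by omega)
      have hg2k : (g * s k * s (k+1)) k = g (k+1) := by
        rw [mul_s_apply, hsk1k, hg1k1]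
      have hg2km1 : (g * s k * s (k+1)) (k-1) = g k := by
        rw [mul_s_apply, hsk1km1, mul_s_apply, s_km1 hk1]
      have hd3 : (g * s k * s (k+1)) k < (g * s k * s (k+1)) (k-1) := by
        rw [hg2k, hg2km1]
        omega
      have e3 : Ninv n (g * s k * s (k+1) * s k) + 1 = Ninv n (g * s k * s (k+1)) :=
        Ninv_mul_s_descent hk1 (by omega) hd3
      have hf3 : Fix n (g * s k * s (k+1) * s k) :=
        ((hf.mul (Fix.s (by omega))).mul (Fix.s hk2)).mul (Fix.s (by omega))
      obtain ⟨u, hu1, hu2, hu3⟩ := exists_word (Ninv n (g * s k * s (k+1) * s k)) _ hf3 rfl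
      refine ⟨u, [], k, hk1, hk2, ?_, ?_, ?_⟩
      · intro l hl
        simp only [List.append_nil, List.mem_append] at hl
        rcases hl with hl | hl
        · exact hu1 l hl
        · simp at hl
          omega
      · have hP : P (u ++ [k, k+1, k] ++ []) = P u * (s k * s (k+1) * s k) := by
          rw [List.append_nil, P_append]
          simp [P, mul_assoc]
        rw [hP, hu2]
        have : g * s k * s (k+1) * s k * (s k * s (k+1) * s k)
            = g * ((s k * s (k+1) * s k) * (s k * s (k+1) * s k)) := by group
        rw [this, braid_sq, mul_one]
      · simp only [List.append_nil, List.length_append, List.length_cons, List.length_nil]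
        omega
    · push_neg at hcons
      have key : ∃ k, 1 ≤ k ∧ k ≤ n ∧ g k < g (k-1) ∧ Has321 (g * s k) := by
        rcases Nat.lt_or_ge (x+1) y with hxy2 | hxy2
        · obtain ⟨k, hk1, hk2, hkd⟩ := exists_descent_interval hxy h2
          refine ⟨k, by omega, by omega, hkd, ?_⟩
          rcases eq_or_ne k y with rfl | hky
          · refine ⟨x, k-1, z, by omega, by omega, ?_, ?_⟩
            · rw [mul_s_apply, mul_s_apply, s_km1 (by omega),
                s_apply_of_ne _ _ (by omega) (by omega)]
              exact h1
            · rw [mul_s_apply, mul_s_apply, s_km1 (by omega),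
                s_apply_of_ne _ _ (by omega) (by omega)]
              exact h2
          · rcases eq_or_ne (k-1) x with hkx | hkx
            · refine ⟨k, y, z, by omega, hyz, ?_, ?_⟩
              · rw [mul_s_apply, mul_s_apply, s_apply_of_ne _ _ (by omega) (by omega),
                  s_apply_of_ne _ _ (by omega) (by omega)]
                exact h1
              · rw [mul_s_apply, mul_s_apply, s_kk (by omega), hkx,
                  s_apply_of_ne _ _ (by omega) (by omega)]
                exact h2
            · refine ⟨x, y, z, hxy, hyz, ?_, ?_⟩
              · rw [mul_s_apply, mul_s_apply, s_apply_of_ne _ _ (by omega) (by omega),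
                  s_apply_of_ne _ _ (by omega) (by omega)]
                exact h1
              · rw [mul_s_apply, mul_s_apply, s_apply_of_ne _ _ (by omega) (by omega),
                  s_apply_of_ne _ _ (by omega) (by omega)]
                exact h2
        · rcases Nat.lt_or_ge (y+1) z with hyz2 | hyz2
          · obtain ⟨k, hk1, hk2, hkd⟩ := exists_descent_interval hyz h1
            refine ⟨k, by omega, by omega, hkd, ?_⟩
            rcases eq_or_ne k z with rfl | hkz
            · refine ⟨x, y, k-1, hxy, by omega, ?_, ?_⟩
              · rw [mul_s_apply, mul_s_apply, s_km1 (by omega),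
                  s_apply_of_ne _ _ (by omega) (by omega)]
                exact h1
              · rw [mul_s_apply, mul_s_apply, s_apply_of_ne _ _ (by omega) (by omega),
                  s_apply_of_ne _ _ (by omega) (by omega)]
                exact h2
            · rcases eq_or_ne (k-1) y with hky | hky
              · refine ⟨x, k, z, by omega, by omega, ?_, ?_⟩
                · rw [mul_s_apply, mul_s_apply, s_kk (by omega), hky,
                    s_apply_of_ne _ _ (by omega) (by omega)]
                  exact h1
                · rw [mul_s_apply, mul_s_apply, s_kk (by omega), hky,
                    s_apply_of_ne _ _ (by omega) (by omega)]
                  exact h2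
              · refine ⟨x, y, z, hxy, hyz, ?_, ?_⟩
                · rw [mul_s_apply, mul_s_apply, s_apply_of_ne _ _ (by omega) (by omega),
                    s_apply_of_ne _ _ (by omega) (by omega)]
                  exact h1
                · rw [mul_s_apply, mul_s_apply, s_apply_of_ne _ _ (by omega) (by omega),
                    s_apply_of_ne _ _ (by omega) (by omega)]
                  exact h2
          · exfalso
            have hy1 : y = x + 1 := by omega
            have hz1 : z = y + 1 := by omega
            have hd : g y < g (y - 1) := by
              have : y - 1 = x := by omega
              rw [this]
              exact h2
            have := hcons y (by omega) (by omega) hd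
            rw [hz1] at h1
            omega
      obtain ⟨k, hk1, hkn, hd, hp'⟩ := key
      have e1 := Ninv_mul_s_descent hk1 hkn hd
      have hf' : Fix n (g * s k) := hf.mul (Fix.s hkn)
      obtain ⟨a, b, k', hk'1, hk'2, hw, hP, hlen⟩ :=
        ih (Ninv n (g * s k)) (by omega) (g * s k) hf' rfl hp'
      refine ⟨a, b ++ [k], k', hk'1, hk'2, ?_, ?_, ?_⟩
      · intro l hl
        simp only [List.mem_append, List.mem_singleton] at hl
        rcases hl with (hl | hl) | (hl | rfl)
        · exact hw l (List.mem_append.2 (Or.inl (List.mem_append.2 (Or.inl hl))))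
        · exact hw l (List.mem_append.2 (Or.inl (List.mem_append.2 (Or.inr hl))))
        · exact hw l (List.mem_append.2 (Or.inr hl))
        · exact ⟨hk1, hkn⟩
      · have e : a ++ [k', k'+1, k'] ++ (b ++ [k]) = (a ++ [k', k'+1, k'] ++ b) ++ [k] := by
          simp [List.append_assoc]
        rw [e, P_append, hP, P_singleton, mul_assoc, s_mul_self, mul_one]
      · have e : a ++ [k', k'+1, k'] ++ (b ++ [k]) = (a ++ [k', k'+1, k'] ++ b) ++ [k] := by
          simp [List.append_assoc]
        rw [e, List.length_append, hlen]
        simp only [List.length_singleton]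
        omega


lemma fix_above_lt {g : Equiv.Perm ℕ} {j : ℕ} (hfa : ∀ x, j < x → g x = x)
    (hne : g j ≠ j) : g j < j := by
  rcases lt_trichotomy (g j) j with h | h | h
  · exact h
  · exact absurd h hne
  · exfalso
    have := hfa (g j) h
    have := g.injective this
    omega

/-- existence of the normal form for 321-avoiding permutations -/
lemma nf_exists {n : ℕ} : ∀ (N : ℕ) (g : Equiv.Perm ℕ), Fix n g → Ninv n g = N →
    ¬ Has321 g →
    ∃ L, NFData n L ∧ P (nfWord L) = g ∧
      ∀ q ∈ L.head?, (∀ x, q.2 < x → g x = x) ∧ g q.2 = q.1 - 1 ∧ g q.2 ≠ q.2 := by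
  intro N
  induction N using Nat.strong_induction_on with
  | _ N ih =>
    intro g hf hN havoid
    rcases eq_or_ne g 1 with rfl | hg
    · exact ⟨[], ⟨by simp, List.isChain_nil, by simp⟩, by simp [nfWord], by simp⟩
    · -- the largest moved point
      classical
      set j := Nat.findGreatest (fun x => g x ≠ x) n with hj
      have hwit : ∃ x, g x ≠ x := by
        by_contra hc
        push_neg at hc
        exact hg (Equiv.ext fun x => hc x)
      obtain ⟨x0, hx0⟩ := hwit
      have hx0n : x0 ≤ n := by
        by_contra hc
        push_neg at hc
        exact hx0 (hf x0 hc)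
      have hjne : g j ≠ j := Nat.findGreatest_spec (P := fun x => g x ≠ x) hx0n hx0
      have hjn : j ≤ n := Nat.findGreatest_le n
      have gfix : ∀ x, j < x → g x = x := by
        intro x hx
        rcases le_or_gt x n with h | h
        · by_contra hc
          exact Nat.findGreatest_is_greatest hx h hc
        · exact hf x h
      have hgj : g j < j := fix_above_lt gfix hjne
      set i := g j + 1 with hi
      have hi1 : 1 ≤ i := by omega
      have hij : i ≤ j := by omega
      set C := P (List.Ico i (j+1)) with hC
      set h := C⁻¹ * g with hh
      have hCh : C * h = g := by rw [hh]; group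
      have hCapp := C_apply' hi1 hij
      have hCj : C j = i - 1 := by rw [← hC] at hCapp; rw [hCapp]; simp
      rw [← hC] at hCapp
      have hfixh : ∀ x, j ≤ x → h x = x := by
        intro x hx
        rcases eq_or_lt_of_le hx with heq | hx'
        · rw [← heq]
          have e : g j = C j := by rw [hCj]; omega
          rw [hh, Equiv.Perm.mul_apply, e, Equiv.Perm.inv_def, Equiv.symm_apply_apply]
        · have h1 : g x = x := gfix x hx'
          have h2 : C x = x := by
            rw [hCapp, if_neg (by omega), if_neg (by omega)]
          rw [hh, Equiv.Perm.mul_apply, h1]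
          calc C⁻¹ x = C⁻¹ (C x) := by rw [h2]
            _ = x := Equiv.symm_apply_apply C x
      have hfixhn : Fix n h := fun x hx => hfixh x (by omega)
      have hNsplit : Ninv n g = (j + 1 - i) + Ninv n h := by
        rw [← hCh, hC]
        exact Ninv_C_mul hi1 hij hjn hfixh
      have hmaps : ∀ u, u < j → h u < j := by
        intro u hu
        by_contra hc
        push_neg at hc
        have := hfixh _ hc
        have := h.injective this
        omega
      have hrel : ∀ u, u < j → g u = C (h u) := by
        intro u _
        rw [← hCh]
        rfl
      have hCbound : ∀ v, v < j → (C v = v ∨ C v = v + 1) := by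
        intro v hv
        rw [hCapp, if_neg (by omega)]
        split_ifs
        · right; rfl
        · left; rfl
      have havoidh : ¬ Has321 h := by
        rintro ⟨a, b, c, hab, hbc, p1, p2⟩
        have hneq1 : g c ≠ g b := fun e => by have := g.injective e; omega
        have hneq2 : g b ≠ g a := fun e => by have := g.injective e; omega
        have hb : b < j := by
          by_contra hc
          push_neg at hc
          have e1 := hfixh b hc
          have e2 := hfixh c (by omega)
          omega
        have ha : a < j := by omega
        have hcj : c < j := by
          by_contra hc2
          push_neg at hc2
          have e1 := hfixh c hc2
          have := hmaps b hb
          omega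
        apply havoid
        refine ⟨a, b, c, hab, hbc, ?_, ?_⟩
        · have e1 := hrel b hb
          have e2 := hrel c hcj
          rcases hCbound (h b) (hmaps b hb) with e3 | e3 <;>
            rcases hCbound (h c) (hmaps c hcj) with e4 | e4 <;> omega
        · have e1 := hrel a ha
          have e2 := hrel b hb
          rcases hCbound (h a) (hmaps a ha) with e3 | e3 <;>
            rcases hCbound (h b) (hmaps b hb) with e4 | e4 <;> omega
      obtain ⟨L', hL', hPL', hheadL'⟩ := ih (Ninv n h) (by omega) h hfixhn rfl havoidh
      -- head of L' is strictly below (i, j)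
      have hheadrel : ∀ q ∈ L'.head?, q.1 < i ∧ q.2 < j := by
        intro q hq
        obtain ⟨hq1, hq2, hq3⟩ := hheadL' q hq
        have hq2j : q.2 < j := by
          by_contra hc
          push_neg at hc
          exact hq3 (hfixh q.2 hc)
        refine ⟨?_, hq2j⟩
        -- pigeonhole: need h q.2 < i - 1
        set j' := q.2 with hj'
        have hbq := (hL'.2.2 q (by cases L' with
          | nil => simp at hq
          | cons p T => simp at hq; rw [hq]; simp))
        have hhj' : h j' < j' := fix_above_lt hq1 hq3
        by_contra hcc
        push_neg at hcc
        -- hcc : i ≤ q.1; q.1 = h q.2 + 1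
        have hq1val : q.1 = h j' + 1 := by omega
        have hup : i - 1 ≤ h j' := by omega
        -- values on (j', j)
        have hgx : ∀ x, j' < x → x < j → g x = x + 1 := by
          intro x hx1 hx2
          have e1 : h x = x := hq1 x hx1
          have e2 := hrel x hx2
          rw [e1] at e2
          rw [hCapp, if_neg (by omega), if_pos (by omega)] at e2
          exact e2
        have hgj' : g j' = h j' + 1 := by
          have e2 := hrel j' hq2j
          rw [hCapp, if_neg (by omega), if_pos (by omega)] at e2
          omega
        -- find x1 < j' with g x1 > g j'
        have hx1 : ∃ x1, x1 < j' ∧ g j' < g x1 := by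
          by_contra hc
          push_neg at hc
          -- W has j - g j' elements but fits in Ioo j' j
          set W := (Finset.range (j+1)).filter (fun x => g j' < g x) with hW
          have hWcard : W.card = j - g j' := by
            have hWb : W.card = ((Finset.range (j+1)).filter (fun v => g j' < v)).card := by
              apply Finset.card_bij (fun x _ => g x)
              · intro a ha
                simp only [hW, Finset.mem_filter, Finset.mem_range] at ha ⊢
                refine ⟨?_, ha.2⟩
                rcases lt_trichotomy a j with h' | h' | h'
                · have hm := hmaps a h'
                  have hr := hrel a h'
                  rcases hCbound (h a) hm with e | e <;> omega
                · rw [h']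
                  omega
                · have := gfix a h'
                  omega
              · intro a _ b _ e
                exact g.injective e
              · intro v hv
                simp only [Finset.mem_filter, Finset.mem_range] at hv
                refine ⟨g.symm v, ?_, by rw [Equiv.apply_symm_apply]⟩
                simp only [hW, Finset.mem_filter, Finset.mem_range, Equiv.apply_symm_apply]
                refine ⟨?_, hv.2⟩
                by_contra hc2
                push_neg at hc2
                have : g (g.symm v) = g.symm v := gfix _ (by omega)
                rw [Equiv.apply_symm_apply] at this
                omega
            rw [hWb]
            have : (Finset.range (j+1)).filter (fun v => g j' < v)
                = Finset.Ico (g j' + 1) (j+1) := by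
              ext v
              simp only [Finset.mem_filter, Finset.mem_range, Finset.mem_Ico]
              omega
            rw [this, Nat.card_Ico]
            omega
          have hWsub : W ⊆ Finset.Ioo j' j := by
            intro x hx
            simp only [hW, Finset.mem_filter, Finset.mem_range] at hx
            simp only [Finset.mem_Ioo]
            obtain ⟨hx1, hx2⟩ := hx
            have hxj : x ≠ j := by
              intro e
              rw [e] at hx2
              have : g j = i - 1 := by omega
              omega
            have hxj' : x ≠ j' := by
              intro e
              rw [e] at hx2
              omega
            by_contra hc3
            push_neg at hc3
            rcases lt_or_ge x j' with h' | h'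
            · have := hc x h'
              omega
            · omega
          have := Finset.card_le_card hWsub
          rw [hWcard, Nat.card_Ioo] at this
          omega
        obtain ⟨x1, hx11, hx12⟩ := hx1
        apply havoid
        refine ⟨x1, j', j, by omega, by omega, ?_, hx12⟩
        have : g j = i - 1 := by omega
        omega
      refine ⟨(i, j) :: L', ⟨?_, ?_, ?_⟩, ?_, ?_⟩
      · -- length
        have hlen : ∀ (T : List (ℕ × ℕ)) (m : ℕ),
            T.Chain' (fun a b => b.1 < a.1 ∧ b.2 < a.2) →
            (∀ p ∈ T, 1 ≤ p.2) → (∀ q ∈ T.head?, q.2 ≤ m) → T.length ≤ m := by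
          intro T
          induction T with
          | nil => intro m _ _ _; simp
          | cons p T ihT =>
            intro m hch hpos hhd
            have h1 := hhd p (by simp)
            have h2 : ∀ q ∈ T.head?, q.2 ≤ m - 1 := by
              intro q hq
              cases T with
              | nil => simp at hq
              | cons r T' =>
                simp only [List.head?_cons, Option.mem_some_iff] at hq
                have h3 := hch.rel_head
                rw [← hq]
                omega
            have h3 := ihT (m-1) hch.tail (fun p hp => hpos p (by simp [hp])) h2
            have hp1 := hpos p (by simp)
            simp only [List.length_cons]
            omega
        apply hlen ((i,j) :: L') n
        · rw [List.Chain', List.isChain_cons]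
          exact ⟨fun q hq => hheadrel q hq, hL'.2.1⟩
        · intro p hp
          rcases List.mem_cons.1 hp with rfl | hp'
          · simp; omega
          · exact (hL'.2.2 p hp').1.trans (hL'.2.2 p hp').2.1
        · intro q hq
          simp only [List.head?_cons, Option.mem_some_iff] at hq
          rw [← hq]
          simpa using hjn
      · rw [List.Chain', List.isChain_cons]
        exact ⟨fun q hq => hheadrel q hq, hL'.2.1⟩
      · intro p hp
        rcases List.mem_cons.1 hp with rfl | hp'
        · exact ⟨hi1, hij, hjn⟩
        · exact hL'.2.2 p hp'
      · rw [nfw_cons, P_append, ← hC, hPL', hCh]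
      · intro q hq
        simp only [List.head?_cons, Option.mem_some_iff] at hq
        subst hq
        exact ⟨fun x hx => gfix x hx, by simp [hi], by simpa using hjne⟩


/-! ### Bridge to `Equiv.Perm (Fin (n+1))` -/

/-- the embedding `Perm (Fin (n+1)) → Perm ℕ` -/
noncomputable def Emb (n : ℕ) : Equiv.Perm (Fin (n+1)) →* Equiv.Perm ℕ :=
  Equiv.Perm.extendDomainHom (p := fun x : ℕ => x < n + 1) Fin.equivSubtype

lemma Emb_injective (n : ℕ) : Function.Injective (Emb n) :=
  Equiv.Perm.extendDomainHom_injective _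

lemma Emb_apply_lt {n : ℕ} (g : Equiv.Perm (Fin (n+1))) {x : ℕ} (hx : x < n + 1) :
    Emb n g x = (g ⟨x, hx⟩).val := by
  rw [Emb]
  have := Equiv.Perm.extendDomain_apply_subtype (p := fun x : ℕ => x < n + 1) g
    Fin.equivSubtype (b := x) hx
  simpa [Fin.equivSubtype] using this

lemma Emb_apply_ge {n : ℕ} (g : Equiv.Perm (Fin (n+1))) {x : ℕ} (hx : ¬ x < n + 1) :
    Emb n g x = x := by
  rw [Emb]
  exact Equiv.Perm.extendDomain_apply_not_subtype g Fin.equivSubtype hx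

lemma Emb_fix (n : ℕ) (g : Equiv.Perm (Fin (n+1))) : Fix n (Emb n g) := by
  intro x hx
  exact Emb_apply_ge g (by omega)

lemma val_natCast_of_le {n x : ℕ} (hx : x ≤ n) : (Fin.ofNat (n+1) x).val = x := by
  rw [Fin.val_ofNat]
  exact Nat.mod_eq_of_lt (by omega)

lemma Emb_sig {n k : ℕ} (hk1 : 1 ≤ k) (hkn : k ≤ n) : Emb n (sig n k) = s k := by
  ext x
  rcases lt_or_ge x (n+1) with hx | hx
  · rw [Emb_apply_lt _ hx, sig, s_apply]
    have e1 : (Fin.ofNat (n+1) (k - 1 : ℕ)).val = k - 1 := val_natCast_of_le (by omega)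
    have e2 : (Fin.ofNat (n+1) (k : ℕ)).val = k := val_natCast_of_le hkn
    rcases eq_or_ne (⟨x, hx⟩ : Fin (n+1)) (Fin.ofNat (n+1) (k - 1 : ℕ)) with he | he
    · rw [he, Equiv.swap_apply_left, e2]
      have : x = k - 1 := by rw [← e1, ← he]
      rw [if_pos this]
    · rcases eq_or_ne (⟨x, hx⟩ : Fin (n+1)) (Fin.ofNat (n+1) (k : ℕ)) with he2 | he2
      · rw [he2, Equiv.swap_apply_right, e1]
        have hxk : x = k := by rw [← e2, ← he2]
        have hne : ¬ x = k - 1 := by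
          intro hc
          apply he
          apply Fin.ext
          rw [e1, ← hc]
        rw [if_neg hne, if_pos hxk]
      · rw [Equiv.swap_apply_of_ne_of_ne he he2]
        have hne1 : ¬ x = k - 1 := by
          intro hc
          apply he
          apply Fin.ext
          rw [e1, ← hc]
        have hne2 : ¬ x = k := by
          intro hc
          apply he2
          apply Fin.ext
          rw [e2, ← hc]
        rw [if_neg hne1, if_neg hne2]
  · rw [Emb_apply_ge _ (by omega), s_apply_of_ne _ _ (by omega) (by omega)]

lemma Emb_wprod {n : ℕ} (w : List ℕ) (hw : IsWord n w) : Emb n (wprod n w) = P w := by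
  induction w with
  | nil => simp [wprod, P]
  | cons k t ih =>
    have hk := hw k (by simp)
    have ht : IsWord n t := fun l hl => hw l (by simp [hl])
    have e : wprod n (k :: t) = sig n k * wprod n t := by simp [wprod]
    rw [e, map_mul, Emb_sig hk.1 hk.2, ih ht, P_cons]

lemma len_eq_Ninv {n : ℕ} (g : Equiv.Perm (Fin (n+1))) : len n g = Ninv n (Emb n g) := by
  obtain ⟨w, hw1, hw2, hw3⟩ := exists_word (Ninv n (Emb n g)) (Emb n g) (Emb_fix n g) rfl
  have hmem : Ninv n (Emb n g) ∈ {k | ∃ w : List ℕ, IsWord n w ∧ wprod n w = g ∧ w.length = k} := by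
    refine ⟨w, hw1, ?_, hw3⟩
    apply Emb_injective n
    rw [Emb_wprod w hw1, hw2]
  apply le_antisymm
  · exact Nat.sInf_le hmem
  · apply le_csInf ⟨_, hmem⟩
    rintro k ⟨w', hw'1, hw'2, hw'3⟩
    have := Ninv_le_length w' hw'1
    have e : P w' = Emb n g := by rw [← Emb_wprod w' hw'1, hw'2]
    rw [← e]
    omega

lemma reduced_iff {n : ℕ} (w : List ℕ) :
    Reduced n w ↔ IsWord n w ∧ w.length = Ninv n (P w) := by
  constructor
  · rintro ⟨h1, h2⟩
    refine ⟨h1, ?_⟩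
    rw [h2, len_eq_Ninv, Emb_wprod w h1]
  · rintro ⟨h1, h2⟩
    refine ⟨h1, ?_⟩
    rw [len_eq_Ninv, Emb_wprod w h1, h2]

end StemAux

theorem stmt1 (n : ℕ) :
    (∀ g : Equiv.Perm (Fin (n+1)), FC n g →
      ∃! L : List (ℕ × ℕ), NFData n L ∧ wprod n (nfWord L) = g) ∧
    (∀ L : List (ℕ × ℕ), NFData n L →
      FC n (wprod n (nfWord L)) ∧ Reduced n (nfWord L)) := by
  open StemAux in
  constructor
  · intro g hFC
    have hfix := Emb_fix n g
    have havoid : ¬ Has321 (Emb n g) := by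
      intro hpat
      obtain ⟨a, b, k, hk1, hk2, hw, hP, hlen⟩ :=
        braid_word (Ninv n (Emb n g)) (Emb n g) hfix rfl hpat
      set w1 := a ++ [k, k+1, k] ++ b with hw1def
      set w2 := a ++ [k+1, k, k+1] ++ b with hw2def
      have hw2letters : ∀ l ∈ w2, 1 ≤ l ∧ l ≤ n := by
        intro l hl
        simp only [hw2def, List.mem_append] at hl
        rcases hl with (hl | hl) | hl
        · exact hw l (by simp [hw1def, hl])
        · simp only [List.mem_cons, List.not_mem_nil, or_false] at hl
          rcases hl with rfl | rfl | rfl <;> omega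
        · exact hw l (by simp [hw1def, hl])
      have hbraid : P [k, k+1, k] = P [k+1, k, k+1] := by
        have h := s_braid hk1
        simp only [P_cons, P_nil, mul_one]
        rw [← mul_assoc, ← mul_assoc, h]
      have hPw2 : P w2 = Emb n g := by
        rw [← hP, hw1def, hw2def, P_append, P_append, P_append, P_append, hbraid]
      have hlen2 : w2.length = w1.length := by simp [hw1def, hw2def]
      have hred1 : Reduced n w1 := (reduced_iff w1).2 ⟨hw, by rw [hP]; omega⟩
      have hred2 : Reduced n w2 := (reduced_iff w2).2 ⟨hw2letters, by rw [hPw2]; omega⟩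
      have hprod1 : wprod n w1 = g := Emb_injective n (by rw [Emb_wprod _ hw, hP])
      have hprod2 : wprod n w2 = g := Emb_injective n (by rw [Emb_wprod _ hw2letters, hPw2])
      exact not_rtg_braid a b k (hFC w1 w2 hred1 hred2 hprod1 hprod2)
    obtain ⟨L, hND, hPL, -⟩ := nf_exists (Ninv n (Emb n g)) (Emb n g) hfix rfl havoid
    refine ⟨L, ⟨hND, ?_⟩, ?_⟩
    · apply Emb_injective n
      rw [Emb_wprod _ (nfw_letters hND), hPL]
    · rintro L₂ ⟨h1, h2⟩
      apply nf_unique L₂ L h1 hND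
      have e1 : P (nfWord L₂) = Emb n g := by
        rw [← Emb_wprod _ (nfw_letters h1), h2]
      rw [e1, hPL]
  · intro L hND
    have hlet := nfw_letters hND
    have hred : Reduced n (nfWord L) := (reduced_iff _).2 ⟨hlet, (Ninv_nfw hND).symm⟩
    refine ⟨?_, hred⟩
    intro w w' hr hr' hw hw'
    have hPw : P w = P (nfWord L) := by
      rw [← Emb_wprod _ hr.1, hw, Emb_wprod _ hlet]
    have hPw' : P w' = P (nfWord L) := by
      rw [← Emb_wprod _ hr'.1, hw', Emb_wprod _ hlet]
    have h1 := words_to_nf w.length L w hND hr.1 hPw rfl ((reduced_iff w).1 hr).2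
    have h2 := words_to_nf w'.length L w' hND hr'.1 hPw' rfl ((reduced_iff w').1 hr').2
    exact h1.trans (RTG_symm h2)
end

section
/- The number of sequences (i_1,j_1),...,(i_p,j_p) with 0 ≤ p ≤ n, n ≥ j_1 > ··· > j_p ≥ 1, n ≥ i_1 > ··· > i_p ≥ 1, and j_t ≥ i_t for all t, equals the Catalan number C_{n+1}. -/
open Polynomial Finset

section Stmt2Aux

private def Bcnt : ℕ → ℕ → ℕ
  | 0, _ => 1
  | n+1, c => Bcnt n c + ∑ i ∈ Finset.Icc 1 (min (n+1) (c-1)), Bcnt n i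

private def NFset : ℕ → ℕ → Finset (List (ℕ × ℕ))
  | 0, _ => {[]}
  | n+1, c => NFset n c ∪ (Finset.Icc 1 (min (n+1) (c-1))).biUnion
      (fun i => (NFset n i).image (fun L => (i, n+1) :: L))

private instance : IsTrans (ℕ × ℕ) (fun a b => b.1 < a.1 ∧ b.2 < a.2) :=
  ⟨fun _ _ _ h1 h2 => ⟨h2.1.trans h1.1, h2.2.trans h1.2⟩⟩

private lemma nf_len_le {n : ℕ} {L : List (ℕ × ℕ)}
    (hp : L.Pairwise (fun a b => b.1 < a.1 ∧ b.2 < a.2))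
    (hb : ∀ p ∈ L, 1 ≤ p.2 ∧ p.2 ≤ n) : L.length ≤ n := by
  have hnd : (L.map Prod.snd).Nodup := List.pairwise_map.mpr (hp.imp fun h => h.2.ne')
  have hsub : (L.map Prod.snd).toFinset ⊆ Finset.Icc 1 n := by
    intro x hx
    simp only [List.mem_toFinset, List.mem_map] at hx
    obtain ⟨p, hpL, rfl⟩ := hx
    have := hb p hpL
    simp only [Finset.mem_Icc]
    omega
  have hc := Finset.card_le_card hsub
  rw [List.toFinset_card_of_nodup hnd] at hc
  simpa using hc

private lemma mem_NFset : ∀ (n c : ℕ) (L : List (ℕ × ℕ)),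
    L ∈ NFset n c ↔ (NFData n L ∧ ∀ q ∈ L.head?, q.1 < c) := by
  intro n
  induction n with
  | zero =>
    intro c L
    simp only [NFset, Finset.mem_singleton]
    constructor
    · rintro rfl
      exact ⟨⟨by simp, List.isChain_nil, by simp⟩, by simp⟩
    · rintro ⟨⟨-, -, hb⟩, -⟩
      cases L with
      | nil => rfl
      | cons p t =>
        have := hb p (List.mem_cons_self)
        omega
  | succ n ih =>
    intro c L
    rw [NFset]
    simp only [Finset.mem_union, Finset.mem_biUnion, Finset.mem_image, Finset.mem_Icc]
    constructor
    · rintro (h | ⟨i, ⟨hi1, hi2⟩, L', hL', rfl⟩)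
      · obtain ⟨⟨h1, h2, h3⟩, hh⟩ := (ih c L).mp h
        exact ⟨⟨h1.trans (by omega), h2, fun p hp => by have := h3 p hp; omega⟩, hh⟩
      · obtain ⟨⟨h1, h2, h3⟩, hh⟩ := (ih i L').mp hL'
        have hall : ∀ p ∈ L', p.1 < i := by
          cases L' with
          | nil => simp
          | cons q t =>
            have hq : q.1 < i := hh q rfl
            intro p hp
            rcases List.mem_cons.mp hp with rfl | hp'
            · exact hq
            · have := (List.pairwise_cons.mp (List.isChain_iff_pairwise.mp h2)).1 p hp'
              omega
        have hchain : List.Chain' (fun a b => b.1 < a.1 ∧ b.2 < a.2) ((i, n+1) :: L') := by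
          unfold List.Chain' at h2 ⊢
          rw [List.isChain_iff_pairwise] at h2 ⊢
          refine List.pairwise_cons.mpr ⟨fun p hp => ⟨hall p hp, ?_⟩, h2⟩
          have := h3 p hp
          omega
        refine ⟨⟨by simpa using h1, hchain, ?_⟩, ?_⟩
        · intro p hp
          rcases List.mem_cons.mp hp with rfl | hp'
          · simp only
            omega
          · have := h3 p hp'
            omega
        · intro q hq
          simp only [List.head?_cons, Option.mem_def, Option.some.injEq] at hq
          subst hq
          simp only
          omega
    · rintro ⟨⟨h1, h2, h3⟩, hh⟩
      cases L with
      | nil =>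
        left
        exact (ih c []).mpr ⟨⟨by simp, List.isChain_nil, by simp⟩, by simp⟩
      | cons p t =>
        obtain ⟨i, j⟩ := p
        have hpw := List.isChain_iff_pairwise.mp h2
        have htall : ∀ q ∈ t, q.1 < i ∧ q.2 < j := by
          intro q hq
          exact (List.pairwise_cons.mp hpw).1 q hq
        have hbnd := h3 (i, j) (List.mem_cons_self)
        simp only at hbnd
        have hlen_t : t.length ≤ n := by
          rcases Nat.eq_zero_or_pos j with rfl | hj0
          · omega
          · apply nf_len_le (hpw.of_cons)
            intro q hq
            have := h3 q (List.mem_cons_of_mem _ hq)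
            have := (htall q hq).2
            omega
        have hhead : i < c := hh (i, j) rfl
        by_cases hj : j ≤ n
        · left
          apply (ih c _).mpr
          refine ⟨⟨?_, h2, ?_⟩, ?_⟩
          · apply nf_len_le (List.isChain_iff_pairwise.mp h2)
            intro q hq
            rcases List.mem_cons.mp hq with rfl | hq'
            · simp only; omega
            · have := h3 q (List.mem_cons_of_mem _ hq')
              have := (htall q hq').2
              omega
          · intro q hq
            rcases List.mem_cons.mp hq with rfl | hq'
            · simp only; omega
            · have := h3 q (List.mem_cons_of_mem _ hq')
              have := (htall q hq').2
              omega
          · exact hh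
        · right
          have hj' : j = n + 1 := by omega
          subst hj'
          refine ⟨i, ⟨by omega, by omega⟩, t, ?_, rfl⟩
          apply (ih i t).mpr
          refine ⟨⟨hlen_t, List.isChain_iff_pairwise.mpr hpw.of_cons, ?_⟩, ?_⟩
          · intro q hq
            have := h3 q (List.mem_cons_of_mem _ hq)
            have := (htall q hq).2
            omega
          · intro q hq
            exact (htall q (List.mem_of_mem_head? hq)).1

private lemma card_NFset (n c : ℕ) : (NFset n c).card = Bcnt n c := by
  induction n generalizing c with
  | zero => simp [NFset, Bcnt]
  | succ n ih =>
    rw [NFset, Bcnt]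
    rw [Finset.card_union_of_disjoint, Finset.card_biUnion]
    · congr 1
      · exact ih c
      · refine Finset.sum_congr rfl fun i _ => ?_
        rw [Finset.card_image_of_injective _ (fun a b h => by simpa using h), ih i]
    · intro i _ j _ hij
      rw [Function.onFun, Finset.disjoint_left]
      rintro L hLi hLj
      simp only [Finset.mem_image] at hLi hLj
      obtain ⟨a, -, rfl⟩ := hLi
      obtain ⟨b, -, hb⟩ := hLj
      apply hij
      have h1 := (List.cons_eq_cons.mp hb).1
      exact (congrArg Prod.fst h1).symm
    · rw [Finset.disjoint_left]
      rintro L hL hR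
      simp only [Finset.mem_biUnion, Finset.mem_image] at hR
      obtain ⟨i, -, a, -, rfl⟩ := hR
      have := ((mem_NFset n c _).mp hL).1.2.2 (i, n+1) (List.mem_cons_self)
      omega

private lemma sum_choose_shift (n r M : ℕ) :
    ∑ i ∈ Finset.Icc 1 M, ((n + i - 1).choose r : ℤ)
      = ((n + M).choose (r+1) : ℤ) - ((n).choose (r+1) : ℤ) := by
  induction M with
  | zero => simp
  | succ M ihM =>
    rw [Finset.sum_Icc_succ_top (by omega), ihM]
    have h1 : n + (M+1) - 1 = n + M := by omega
    have h2 : n + (M+1) = (n + M) + 1 := by omega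
    rw [h1, h2, Nat.choose_succ_succ]
    push_cast
    ring

private lemma Bcnt_cast (n : ℕ) : ∀ c : ℕ,
    (Bcnt n c : ℤ) = ((n + min (c-1) n).choose n : ℤ)
      - ((n + min (c-1) n).choose (n+2) : ℤ) := by
  induction n with
  | zero => intro c; simp [Bcnt]
  | succ n ih =>
    intro c
    rw [Bcnt]
    push_cast
    rw [ih c]
    have hM : ∀ i ∈ Finset.Icc 1 (min (n+1) (c-1)), (Bcnt n i : ℤ)
        = ((n + i - 1).choose n : ℤ) - ((n + i - 1).choose (n+2) : ℤ) := by
      intro i hi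
      simp only [Finset.mem_Icc] at hi
      rw [ih i]
      have : min (i-1) n = i - 1 := by omega
      rw [this]
      have : n + (i - 1) = n + i - 1 := by omega
      rw [this]
    rw [Finset.sum_congr rfl hM, Finset.sum_sub_distrib, sum_choose_shift, sum_choose_shift]
    have hz1 : ((n).choose (n+1) : ℤ) = 0 := by
      rw [Nat.choose_eq_zero_of_lt (by omega)]; norm_num
    have hz2 : ((n).choose (n+3) : ℤ) = 0 := by
      rw [Nat.choose_eq_zero_of_lt (by omega)]; norm_num
    rw [hz1, hz2]
    rcases le_or_gt (c-1) n with h | h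
    · have e1 : min (c-1) n = c - 1 := by omega
      have e2 : min (n+1) (c-1) = c - 1 := by omega
      have e3 : min (c-1) (n+1) = c - 1 := by omega
      rw [e1, e2, e3]
      have e4 : n + 1 + (c-1) = (n + (c-1)) + 1 := by omega
      rw [e4, Nat.choose_succ_succ (n + (c-1)) n]
      have e5 : n + 3 = (n+2) + 1 := by omega
      rw [e5, Nat.choose_succ_succ (n + (c-1)) (n+2)]
      push_cast
      ring
    · have e1 : min (c-1) n = n := by omega
      have e2 : min (n+1) (c-1) = n + 1 := by omega
      have e3 : min (c-1) (n+1) = n + 1 := by omega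
      rw [e1, e2, e3]
      have e4 : n + 1 + (n + 1) = (n + (n+1)) + 1 := by omega
      rw [e4]
      have e5 : n + 3 = (n+2) + 1 := by omega
      rw [e5, Nat.choose_succ_succ (n + (n+1)) (n+2), Nat.choose_succ_succ (n + (n+1)) n]
      -- remaining: express (n+(n+1)).choose k via (n+n).choose
      have e6 : n + (n+1) = (n + n) + 1 := by omega
      rw [e6, Nat.choose_succ_succ (n+n) n, Nat.choose_succ_succ (n+n) (n+1),
        Nat.choose_succ_succ (n+n) (n+2)]
      -- also need ((n+n)+1).choose n = (n+n).choose n + (n+n).choose (n+1) is wrong form;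
      -- we need ((n+n)+1).choose n : use symmetry
      have e7 : ((n+n)+1).choose n = (n+n).choose n + (n+n).choose (n+1) := by
        have : ((n+n)+1).choose n = ((n+n)+1).choose (n+1) := by
          rw [← Nat.choose_symm (n := (n+n)+1) (k := n+1) (by omega)]
          congr 1
          omega
        rw [this, Nat.choose_succ_succ]
      rw [e7]
      push_cast [Nat.succ_eq_add_one]
      ring

end Stmt2Aux

theorem stmt2 (n : ℕ) :
    Nat.card {L : List (ℕ × ℕ) // NFData n L} =
      Nat.choose (2*(n+1)) (n+1) / (n+2) := by
  have hcard : Nat.card {L : List (ℕ × ℕ) // NFData n L} = Bcnt n (n+1) := by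
    have hset : {L : List (ℕ × ℕ) | NFData n L} = ↑(NFset n (n+1)) := by
      ext L
      simp only [Set.mem_setOf_eq, Finset.mem_coe, mem_NFset]
      constructor
      · intro h
        refine ⟨h, fun q hq => ?_⟩
        have hqL := List.mem_of_mem_head? hq
        have := h.2.2 q hqL
        omega
      · exact fun h => h.1
    have : Nat.card {L : List (ℕ × ℕ) // NFData n L}
        = Set.ncard {L : List (ℕ × ℕ) | NFData n L} := Nat.card_coe_set_eq _
    rw [this, hset, Set.ncard_coe_finset, card_NFset]
  rw [hcard]
  have hz : (Bcnt n (n+1) : ℤ) * (n+2) = ((2*(n+1)).choose (n+1) : ℤ) := by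
    rw [Bcnt_cast n (n+1)]
    have e0 : min (n+1-1) n = n := by omega
    rw [e0]
    have e0' : n + n = 2 * n := by omega
    rw [e0']
    rcases Nat.eq_zero_or_pos n with rfl | hn
    · norm_num
    · have e1 : ((2*n).choose (n+1) : ℤ) * (n+1) = ((2*n).choose n : ℤ) * n := by
        have := Nat.choose_succ_right_eq (2*n) n
        have h2 : 2*n - n = n := by omega
        rw [h2] at this
        exact_mod_cast this
      have e2 : ((2*n).choose (n+2) : ℤ) * (n+2) = ((2*n).choose (n+1) : ℤ) * ((n:ℤ)-1) := by
        have := Nat.choose_succ_right_eq (2*n) (n+1)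
        have h2 : 2*n - (n+1) = n - 1 := by omega
        rw [h2] at this
        have := congrArg (Nat.cast (R := ℤ)) this
        push_cast [Nat.cast_sub hn] at this
        convert this using 2
        ring
      have e3 : ((n:ℤ)+1) * ((2*(n+1)).choose (n+1) : ℤ)
          = 2 * (2*(n:ℤ)+1) * ((2*n).choose n : ℤ) := by
        have := Nat.succ_mul_centralBinom_succ n
        simp only [Nat.centralBinom] at this
        have h2 : 2 * (n+1) = 2*n + 2 := by ring
        exact_mod_cast this
      have hmul : ((((2*n).choose n : ℤ) - ((2*n).choose (n+2) : ℤ)) * ((n:ℤ)+2)) * ((n:ℤ)+1)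
          = (((2*(n+1)).choose (n+1) : ℤ)) * ((n:ℤ)+1) := by
        linear_combination (-((n:ℤ)+1)) * e2 + (-((n:ℤ)-1)) * e1 + (-1) * e3
      have hne : ((n:ℤ)+1) ≠ 0 := by positivity
      have := mul_right_cancel₀ hne hmul
      linarith [this]
  have hk : Bcnt n (n+1) * (n+2) = (2*(n+1)).choose (n+1) := by exact_mod_cast hz
  symm
  exact Nat.div_eq_of_eq_mul_left (by omega) hk.symm
end

section
/- For 1 ≤ j ≤ n, the length polynomials a_n^j(q) = Σ_{w ∈ A_n^j} q^{l(w)} satisfy the recurrence a_n^j = a_{n-1}^{j-1} + q^j (1 + Σ_{s=j}^{n-1} a_{n-1}^s), with conventions a_m^0 = 0 and a_m^j = 0 for j > m. -/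
open Polynomial Finset

open Fin.NatCast

lemma sig_eq (n i : ℕ) : sig n i = Equiv.swap ((i-1 : ℕ) : Fin (n+1)) ((i : ℕ) : Fin (n+1)) := by
  simp only [sig, Fin.ofNat_eq_cast]

section Cyc
variable {n : ℕ}

lemma wprod_nil : wprod n [] = 1 := rfl

lemma wprod_append (w w' : List ℕ) : wprod n (w ++ w') = wprod n w * wprod n w' := by
  simp [wprod, List.map_append, List.prod_append]

lemma wprod_singleton (t : ℕ) : wprod n [t] = sig n t := by simp [wprod]

lemma val_cast_le {a : ℕ} (ha : a ≤ n) : ((a : Fin (n+1)) : ℕ) = a :=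
  Fin.val_cast_of_lt (Nat.lt_succ_of_le ha)

lemma sig_apply_of_ne (t : ℕ) (ht1 : 1 ≤ t) (htn : t ≤ n) (x : Fin (n+1))
    (h1 : (x : ℕ) ≠ t - 1) (h2 : (x : ℕ) ≠ t) : sig n t x = x := by
  rw [sig_eq]
  apply Equiv.swap_apply_of_ne_of_ne
  · intro h; apply h1; rw [h, val_cast_le (by omega)]
  · intro h; apply h2; rw [h, val_cast_le htn]

lemma sig_apply_low (t : ℕ) (ht1 : 1 ≤ t) (htn : t ≤ n) (x : Fin (n+1))
    (h1 : (x : ℕ) = t - 1) : ((sig n t x : Fin (n+1)) : ℕ) = t := by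
  have : x = ((t-1 : ℕ) : Fin (n+1)) := by
    apply Fin.ext; rw [val_cast_le (by omega), h1]
  rw [this, sig_eq, Equiv.swap_apply_left, val_cast_le htn]

lemma sig_apply_high (t : ℕ) (ht1 : 1 ≤ t) (htn : t ≤ n) (x : Fin (n+1))
    (h1 : (x : ℕ) = t) : ((sig n t x : Fin (n+1)) : ℕ) = t - 1 := by
  have : x = ((t : ℕ) : Fin (n+1)) := by
    apply Fin.ext; rw [val_cast_le htn, h1]
  rw [this, sig_eq, Equiv.swap_apply_right, val_cast_le (by omega)]

/-- word for the segment ⌈i,j⌉ -/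
abbrev seg (i j : ℕ) : List ℕ := List.Ico i (j+1)

lemma seg_succ {i j : ℕ} (hi : 1 ≤ i) (h : i ≤ j) : seg i j = seg i (j-1) ++ [j] := by
  have h1 : j - 1 + 1 = j := by omega
  rw [seg, seg, h1, List.Ico.succ_top h]

end Cyc
section Cyc2
variable {n : ℕ}

lemma cyc_spec (i : ℕ) (hi : 1 ≤ i) : ∀ j, i ≤ j → j ≤ n → ∀ x : Fin (n+1),
    ((wprod n (seg i j) x : Fin (n+1)) : ℕ) =
    if (x:ℕ) + 1 < i then (x:ℕ)
    else if (x:ℕ) < j then (x:ℕ)+1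
    else if (x:ℕ) = j then i - 1
    else (x:ℕ) := by
  intro j
  induction j with
  | zero => intro h1 h2 x; omega
  | succ j ih =>
    intro hij hjn x
    have hx := x.isLt
    rcases Nat.lt_or_ge i (j+1) with hlt | hge
    · -- i ≤ j, use seg_succ
      have hij' : i ≤ j := by omega
      have hseg : seg i (j+1) = seg i j ++ [j+1] := by
        have := seg_succ (i := i) (j := j+1) hi (by omega)
        simpa using this
      rw [hseg, wprod_append, wprod_singleton, Equiv.Perm.mul_apply,
        ih hij' (by omega) (sig n (j+1) x)]
      rcases Nat.lt_trichotomy (x:ℕ) j with h | h | h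
      · have hfix : sig n (j+1) x = x := by
          apply sig_apply_of_ne (j+1) (by omega) hjn x <;> omega
        rw [hfix]
        by_cases h2 : (x:ℕ)+1 < i
        · simp [h2]
        · simp only [if_neg h2, if_pos h, if_pos (show (x:ℕ) < j+1 by omega)]
      · -- x = j ↦ j+1 then fixed
        have hval : ((sig n (j+1) x : Fin (n+1)) : ℕ) = j+1 :=
          sig_apply_low (j+1) (by omega) hjn x (by omega)
        rw [hval]
        rw [if_neg (show ¬ (j+1)+1 < i by omega), if_neg (show ¬ j+1 < j by omega),
          if_neg (show ¬ j+1 = j by omega), if_neg (show ¬ (x:ℕ)+1 < i by omega),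
          if_pos (show (x:ℕ) < j+1 by omega)]
        omega
      · rcases Nat.eq_or_lt_of_le h with h2 | h2
        · -- x = j+1 ↦ j then ↦ i-1
          have hval : ((sig n (j+1) x : Fin (n+1)) : ℕ) = j :=
            sig_apply_high (j+1) (by omega) hjn x (by omega)
          rw [hval, if_neg (show ¬ j+1 < i by omega), if_neg (show ¬ j < j by omega),
            if_pos rfl, if_neg (show ¬ (x:ℕ)+1 < i by omega),
            if_neg (show ¬ (x:ℕ) < j+1 by omega), if_pos (show (x:ℕ) = j+1 by omega)]
        · have hfix : sig n (j+1) x = x := by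
            apply sig_apply_of_ne (j+1) (by omega) hjn x <;> omega
          rw [hfix, if_neg (show ¬ (x:ℕ)+1 < i by omega), if_neg (show ¬ (x:ℕ) < j by omega),
            if_neg (show ¬ (x:ℕ) = j by omega), if_neg (show ¬ (x:ℕ)+1 < i by omega),
            if_neg (show ¬ (x:ℕ) < j+1 by omega), if_neg (show ¬ (x:ℕ) = j+1 by omega)]
    · -- j+1 = i : singleton
      have hji : j + 1 = i := by omega
      have hs : seg i (j+1) = [i] := by
        rw [seg, hji, List.Ico.succ_top (by omega)]
        simp
      rw [hs, wprod_singleton]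
      by_cases h1 : (x:ℕ) = i - 1
      · rw [sig_apply_low i hi (by omega) x h1, if_neg (show ¬ (x:ℕ)+1 < i by omega),
          if_pos (show (x:ℕ) < j+1 by omega)]
        omega
      · by_cases h2 : (x:ℕ) = i
        · rw [sig_apply_high i hi (by omega) x h2, if_neg (show ¬ (x:ℕ)+1 < i by omega),
            if_neg (show ¬ (x:ℕ) < j+1 by omega), if_pos (show (x:ℕ) = j+1 by omega)]
        · rw [sig_apply_of_ne i hi (by omega) x h1 h2]
          by_cases h3 : (x:ℕ)+1 < i
          · rw [if_pos h3]
          · rw [if_neg h3, if_neg (show ¬ (x:ℕ) < j+1 by omega),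
              if_neg (show ¬ (x:ℕ) = j+1 by omega)]

end Cyc2
section NF
variable {n : ℕ}

lemma nfWord_append (A B : List (ℕ × ℕ)) : nfWord (A ++ B) = nfWord A ++ nfWord B := by
  simp [nfWord]

lemma nfWord_single (p : ℕ × ℕ) : nfWord [p] = seg p.1 p.2 := by
  simp [nfWord, seg]

/-- bounds condition for pairs -/
def PB (n : ℕ) (M : List (ℕ × ℕ)) : Prop := ∀ p ∈ M, 1 ≤ p.1 ∧ p.1 ≤ p.2 ∧ p.2 ≤ n

lemma P1 (M : List (ℕ × ℕ)) (hb : PB n M) (x : Fin (n+1))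
    (hx : ∀ p ∈ M, (x:ℕ) + 1 < p.1) : wprod n (nfWord M) x = x := by
  induction M using List.reverseRecOn with
  | nil => rfl
  | append_singleton M p ih =>
    rw [nfWord_append, nfWord_single, wprod_append, Equiv.Perm.mul_apply]
    have hp := hb p (by simp)
    have hcx : wprod n (seg p.1 p.2) x = x := by
      apply Fin.ext
      rw [cyc_spec p.1 hp.1 p.2 hp.2.1 hp.2.2 x,
        if_pos (hx p (by simp))]
    rw [hcx]
    exact ih (fun q hq => hb q (by simp [hq])) (fun q hq => hx q (by simp [hq]))

lemma P2 (M : List (ℕ × ℕ)) (hM : M.Chain' (fun a b => b.2 < a.2)) (hb : PB n M)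
    (hne : M ≠ []) (x : Fin (n+1)) (hx : (x:ℕ) < (M.getLast hne).2) :
    (x:ℕ) ≤ ((wprod n (nfWord M) x : Fin (n+1)) : ℕ) ∧
      ((wprod n (nfWord M) x : Fin (n+1)) : ℕ) ≤ (M.head hne).2 := by
  induction M using List.reverseRecOn generalizing x with
  | nil => exact absurd rfl hne
  | append_singleton M p ih =>
    rw [nfWord_append, nfWord_single, wprod_append, Equiv.Perm.mul_apply]
    have hp := hb p (by simp)
    have hxp : (x:ℕ) < p.2 := by simpa using hx
    set y := wprod n (seg p.1 p.2) x with hy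
    have hyval : (x:ℕ) ≤ (y:ℕ) ∧ (y:ℕ) ≤ p.2 := by
      rw [hy, cyc_spec p.1 hp.1 p.2 hp.2.1 hp.2.2 x]
      split_ifs <;> omega
    rcases List.eq_nil_or_concat M with hMnil | ⟨M', q, hMq⟩
    · subst hMnil
      simp only [List.nil_append]
      constructor
      · simpa [nfWord, wprod] using hyval.1
      · simpa [nfWord, wprod] using hyval.2
    · have hMne : M ≠ [] := by subst hMq; simp
      have hrel : p.2 < (M.getLast hMne).2 :=
        (List.isChain_append.mp hM).2.2 (M.getLast hMne)
          (by simp [List.getLast?_eq_getLast hMne]) p (by simp)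
      have hchain : M.Chain' (fun a b => b.2 < a.2) := (List.isChain_append.mp hM).1
      have hyx : (y:ℕ) < (M.getLast hMne).2 := by omega
      have := ih hchain (fun q hq => hb q (by simp [hq])) hMne y hyx
      constructor
      · omega
      · have hhead : ((M ++ [p]).head hne) = M.head hMne := by
          rcases M with _ | ⟨a, M⟩
          · exact absurd rfl hMne
          · rfl
        rw [hhead]
        exact this.2

end NF
section Inv
variable {m : ℕ}

/-- inversion count -/
noncomputable def invc (σ : Equiv.Perm (Fin m)) : ℕ :=
  ((Finset.univ ×ˢ Finset.univ).filter
    (fun p : Fin m × Fin m => p.1 < p.2 ∧ σ p.2 < σ p.1)).card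

lemma invc_one : invc (1 : Equiv.Perm (Fin m)) = 0 := by
  rw [invc, Finset.card_eq_zero, Finset.filter_eq_empty_iff]
  rintro ⟨x, y⟩ _ ⟨h1, h2⟩
  simp only [Equiv.Perm.one_apply] at h2
  exact absurd h1 (not_lt.mpr h2.le)

lemma swap_adj_mono {a b x y : Fin m} (hab : (a:ℕ)+1 = (b:ℕ)) (hxy : x < y)
    (hne : ¬(x = a ∧ y = b)) : Equiv.swap a b x < Equiv.swap a b y := by
  have h := not_and_or.mp hne
  rw [Equiv.swap_apply_def, Equiv.swap_apply_def]
  split_ifs <;> simp only [Fin.lt_def, Fin.ext_iff, ne_eq] at * <;> omega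

lemma invc_erase_eq (σ : Equiv.Perm (Fin m)) {a b : Fin m} (hab : (a:ℕ)+1 = (b:ℕ)) :
    ((((Finset.univ ×ˢ Finset.univ)).filter
      (fun p : Fin m × Fin m => p.1 < p.2 ∧ (σ * Equiv.swap a b) p.2 < (σ * Equiv.swap a b) p.1)).erase (a,b)).card =
    ((((Finset.univ ×ˢ Finset.univ)).filter
      (fun p : Fin m × Fin m => p.1 < p.2 ∧ σ p.2 < σ p.1)).erase (a,b)).card := by
  have hab' : a < b := by rw [Fin.lt_def]; omega
  apply Finset.card_nbij' (fun p => (Equiv.swap a b p.1, Equiv.swap a b p.2))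
      (fun p => (Equiv.swap a b p.1, Equiv.swap a b p.2))
  · rintro ⟨x, y⟩ hp
    rw [Finset.mem_coe, Finset.mem_erase, Finset.mem_filter] at hp
    obtain ⟨hpne, -, hlt, hinv⟩ := hp
    have hne : ¬(x = a ∧ y = b) := by
      rintro ⟨rfl, rfl⟩; exact hpne rfl
    rw [Finset.mem_coe, Finset.mem_erase, Finset.mem_filter]
    refine ⟨?_, by simp, swap_adj_mono hab hlt hne, ?_⟩
    · intro hc
      rw [Prod.ext_iff] at hc
      have hx : x = b := by
        have h1 := congrArg (Equiv.swap a b) hc.1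
        rwa [Equiv.swap_apply_self, Equiv.swap_apply_left] at h1
      have hy : y = a := by
        have h1 := congrArg (Equiv.swap a b) hc.2
        rwa [Equiv.swap_apply_self, Equiv.swap_apply_right] at h1
      subst hx; subst hy
      exact absurd (hlt.trans hab') (lt_irrefl _)
    · simpa [Equiv.Perm.mul_apply] using hinv
  · rintro ⟨x, y⟩ hp
    rw [Finset.mem_coe, Finset.mem_erase, Finset.mem_filter] at hp
    obtain ⟨hpne, -, hlt, hinv⟩ := hp
    have hne : ¬(x = a ∧ y = b) := by
      rintro ⟨rfl, rfl⟩; exact hpne rfl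
    rw [Finset.mem_coe, Finset.mem_erase, Finset.mem_filter]
    refine ⟨?_, by simp, swap_adj_mono hab hlt hne, ?_⟩
    · intro hc
      rw [Prod.ext_iff] at hc
      have hx : x = b := by
        have h1 := congrArg (Equiv.swap a b) hc.1
        rwa [Equiv.swap_apply_self, Equiv.swap_apply_left] at h1
      have hy : y = a := by
        have h1 := congrArg (Equiv.swap a b) hc.2
        rwa [Equiv.swap_apply_self, Equiv.swap_apply_right] at h1
      subst hx; subst hy
      exact absurd (hlt.trans hab') (lt_irrefl _)
    · simp only [Equiv.Perm.mul_apply, Equiv.swap_apply_self]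
      exact hinv
  · rintro ⟨x, y⟩ _; simp [Equiv.swap_apply_self]
  · rintro ⟨x, y⟩ _; simp [Equiv.swap_apply_self]

end Inv
section Inv2
variable {m : ℕ}

lemma invc_mul_swap_le (σ : Equiv.Perm (Fin m)) {a b : Fin m} (hab : (a:ℕ)+1 = (b:ℕ)) :
    invc (σ * Equiv.swap a b) ≤ invc σ + 1 := by
  have hkey := invc_erase_eq σ hab
  rw [invc, invc]
  set S := ((Finset.univ ×ˢ Finset.univ).filter
    (fun p : Fin m × Fin m => p.1 < p.2 ∧ (σ * Equiv.swap a b) p.2 < (σ * Equiv.swap a b) p.1))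
  set T := ((Finset.univ ×ˢ Finset.univ).filter
    (fun p : Fin m × Fin m => p.1 < p.2 ∧ σ p.2 < σ p.1))
  calc S.card ≤ (S.erase (a,b)).card + 1 := by
        by_cases h : (a,b) ∈ S
        · rw [Finset.card_erase_add_one h]
        · rw [Finset.erase_eq_of_notMem h]; omega
    _ = (T.erase (a,b)).card + 1 := by rw [hkey]
    _ ≤ T.card + 1 := by
        have := Finset.card_erase_le (s := T) (a := (a,b))
        omega

lemma invc_mul_swap_eq (σ : Equiv.Perm (Fin m)) {a b : Fin m} (hab : (a:ℕ)+1 = (b:ℕ))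
    (hσ : σ a < σ b) : invc (σ * Equiv.swap a b) = invc σ + 1 := by
  have hkey := invc_erase_eq σ hab
  have hab' : a < b := by rw [Fin.lt_def]; omega
  rw [invc, invc]
  set S := ((Finset.univ ×ˢ Finset.univ).filter
    (fun p : Fin m × Fin m => p.1 < p.2 ∧ (σ * Equiv.swap a b) p.2 < (σ * Equiv.swap a b) p.1)) with hS
  set T := ((Finset.univ ×ˢ Finset.univ).filter
    (fun p : Fin m × Fin m => p.1 < p.2 ∧ σ p.2 < σ p.1)) with hT
  have hmemS : (a,b) ∈ S := by
    rw [hS, Finset.mem_filter]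
    refine ⟨by simp, hab', ?_⟩
    simpa [Equiv.Perm.mul_apply, Equiv.swap_apply_left, Equiv.swap_apply_right] using hσ
  have hmemT : (a,b) ∉ T := by
    rw [hT, Finset.mem_filter]
    push_neg
    intro _ _
    exact hσ.le
  rw [← Finset.card_erase_add_one hmemS, hkey, Finset.erase_eq_of_notMem hmemT]

lemma invc_wprod_le {n : ℕ} (w : List ℕ) (hw : IsWord n w) :
    invc (wprod n w) ≤ w.length := by
  induction w using List.reverseRecOn with
  | nil => simp [wprod_nil, invc_one]
  | append_singleton w t ih =>
    rw [wprod_append, wprod_singleton]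
    have ht := hw t (by simp)
    have hab : (((t-1 : ℕ) : Fin (n+1)) : ℕ) + 1 = ((t : ℕ) : Fin (n+1)) := by
      rw [val_cast_le (by omega : t - 1 ≤ n), val_cast_le ht.2]
      omega
    have := invc_mul_swap_le (wprod n w) hab
    have hle := ih (fun q hq => hw q (by simp [hq]))
    rw [sig_eq]
    simp only [List.length_append, List.length_singleton]
    omega

lemma invc_step_eq {n : ℕ} (σ : Equiv.Perm (Fin (n+1))) (t : ℕ) (ht1 : 1 ≤ t) (htn : t ≤ n)
    (h : σ (((t-1 : ℕ) : Fin (n+1))) < σ ((t : ℕ) : Fin (n+1))) :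
    invc (σ * sig n t) = invc σ + 1 := by
  have hab : (((t-1 : ℕ) : Fin (n+1)) : ℕ) + 1 = ((t : ℕ) : Fin (n+1)) := by
    rw [val_cast_le (by omega : t - 1 ≤ n), val_cast_le htn]
    omega
  rw [sig_eq]
  exact invc_mul_swap_eq σ hab h

end Inv2
section Build
variable {n : ℕ}

/-- the relation of the normal form chain -/
abbrev Rnf : ℕ × ℕ → ℕ × ℕ → Prop := fun a b => b.1 < a.1 ∧ b.2 < a.2

instance : IsTrans (ℕ × ℕ) Rnf := ⟨fun _ _ _ h1 h2 => ⟨h2.1.trans h1.1, h2.2.trans h1.2⟩⟩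

lemma inv_build (M : List (ℕ×ℕ)) (hch : M.Chain' (fun a b => b.2 < a.2)) (hb : PB n M)
    (i j : ℕ) (hi : 1 ≤ i) (hij : i ≤ j) (hjn : j ≤ n)
    (hMi : ∀ p ∈ M, i < p.1) (hMj : ∀ h : M ≠ [], j < (M.getLast h).2)
    (hbase : invc (wprod n (nfWord M)) = (nfWord M).length) :
    ∀ t, i ≤ t → t ≤ j →
      invc (wprod n (nfWord M ++ seg i t)) = (nfWord M).length + (t + 1 - i) := by
  have hfixlow : wprod n (nfWord M) (((i-1 : ℕ) : Fin (n+1))) = ((i-1 : ℕ) : Fin (n+1)) := by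
    apply P1 M hb
    intro p hp
    rw [val_cast_le (by omega : i - 1 ≤ n)]
    have := hMi p hp
    omega
  have hlowval : ((wprod n (nfWord M) (((i-1 : ℕ) : Fin (n+1))) : Fin (n+1)) : ℕ) = i - 1 := by
    rw [hfixlow, val_cast_le (by omega : i - 1 ≤ n)]
  have hrval : ∀ v : ℕ, i ≤ v → v ≤ j → v ≤ n →
      v ≤ ((wprod n (nfWord M) ((v : Fin (n+1))) : Fin (n+1)) : ℕ) := by
    intro v hv1 hv2 hv3
    rcases List.eq_nil_or_concat M with rfl | ⟨M', q, hMq⟩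
    · simp [nfWord, wprod, val_cast_le hv3]
    · have hMne : M ≠ [] := by subst hMq; simp
      have h2 := P2 M hch hb hMne ((v : Fin (n+1)))
        (by rw [val_cast_le hv3]; exact lt_of_le_of_lt hv2 (hMj hMne))
      rw [val_cast_le hv3] at h2
      exact h2.1
  intro t ht
  induction t, ht using Nat.le_induction with
  | base =>
    intro _
    have hseg : seg i i = [i] := by rw [seg, List.Ico.succ_top (le_refl i)]; simp
    rw [hseg, wprod_append, wprod_singleton, invc_step_eq _ i hi (by omega), hbase]
    · omega
    · rw [Fin.lt_def, hlowval]
      have := hrval i (le_refl i) hij (by omega)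
      omega
  | succ t hit ih =>
    intro htj1
    have htj : t + 1 ≤ j := htj1
    have hseg : seg i (t+1) = seg i t ++ [t+1] := by
      have := seg_succ (i := i) (j := t+1) hi (by omega)
      simpa using this
    have hassoc : nfWord M ++ seg i (t+1) = (nfWord M ++ seg i t) ++ [t+1] := by
      rw [hseg, List.append_assoc]
    rw [hassoc, wprod_append, wprod_singleton,
      invc_step_eq _ (t+1) (by omega) (by omega), ih (by omega)]
    · omega
    · -- σ (cast t) < σ (cast (t+1)) where σ = wprod (nfWord M ++ seg i t)
      rw [wprod_append]
      simp only [Nat.add_sub_cancel, Equiv.Perm.mul_apply]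
      have hct : wprod n (seg i t) ((t : Fin (n+1))) = ((i-1 : ℕ) : Fin (n+1)) := by
        apply Fin.ext
        rw [cyc_spec i hi t hit (by omega) _, val_cast_le (by omega : t ≤ n),
          val_cast_le (by omega : i - 1 ≤ n), if_neg (by omega), if_neg (by omega), if_pos rfl]
      have hct1 : wprod n (seg i t) (((t+1 : ℕ) : Fin (n+1))) = ((t+1 : ℕ) : Fin (n+1)) := by
        apply Fin.ext
        rw [cyc_spec i hi t hit (by omega) _, val_cast_le (by omega : t + 1 ≤ n),
          if_neg (by omega), if_neg (by omega), if_neg (by omega)]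
      rw [Fin.lt_def, hct, hct1, hlowval]
      have := hrval (t+1) (by omega) htj (by omega)
      push_cast at this ⊢
      omega

lemma nfdata_prefix {M : List (ℕ×ℕ)} {p : ℕ×ℕ} (h : NFData n (M ++ [p])) : NFData n M := by
  obtain ⟨h1, h2, h3⟩ := h
  refine ⟨?_, (List.isChain_append.mp h2).1, fun q hq => h3 q (by simp [hq])⟩
  rw [List.length_append] at h1
  omega

lemma nfdata_last {M : List (ℕ×ℕ)} {p : ℕ×ℕ} (h : NFData n (M ++ [p])) :
    ∀ q ∈ M, p.1 < q.1 ∧ p.2 < q.2 := by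
  have hpw : List.Pairwise Rnf (M ++ [p]) :=
    (List.isChain_iff_pairwise).mp h.2.1
  intro q hq
  exact (List.pairwise_append.mp hpw).2.2 q hq p (by simp)

lemma inv_nf (L : List (ℕ×ℕ)) (hL : NFData n L) :
    invc (wprod n (nfWord L)) = (nfWord L).length := by
  induction L using List.reverseRecOn with
  | nil => simpa [nfWord, wprod_nil] using invc_one
  | append_singleton M p ih =>
    obtain ⟨i, j⟩ := p
    have hM : NFData n M := nfdata_prefix hL
    have hlast := nfdata_last hL
    have hp := hL.2.2 (i, j) (by simp)
    simp only at hp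
    have hch : M.Chain' (fun a b => b.2 < a.2) := hM.2.1.imp (fun a b h => h.2)
    rw [nfWord_append, nfWord_single]
    have := inv_build M hch (fun q hq => hM.2.2 q hq) i j hp.1 hp.2.1 hp.2.2
      (fun q hq => (hlast q hq).1) (fun h => (hlast _ (List.getLast_mem h)).2)
      (ih hM) j hp.2.1 (le_refl j)
    rw [this, List.length_append]
    have hsl : (seg i j).length = j + 1 - i := by simp [seg]
    have hsl2 : (seg (i,j).1 (i,j).2).length = j + 1 - i := hsl
    omega

lemma isword_nf (L : List (ℕ×ℕ)) (hL : PB n L) : IsWord n (nfWord L) := by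
  intro t ht
  rw [nfWord, List.mem_flatten] at ht
  obtain ⟨w, hw, htw⟩ := ht
  rw [List.mem_map] at hw
  obtain ⟨p, hp, rfl⟩ := hw
  rw [List.Ico.mem] at htw
  have := hL p hp
  omega

lemma len_nf (L : List (ℕ×ℕ)) (hL : NFData n L) :
    len n (wprod n (nfWord L)) = (nfWord L).length := by
  have hw : IsWord n (nfWord L) := isword_nf L (fun q hq => hL.2.2 q hq)
  have hmem : (nfWord L).length ∈
      {k | ∃ w : List ℕ, IsWord n w ∧ wprod n w = wprod n (nfWord L) ∧ w.length = k} :=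
    ⟨nfWord L, hw, rfl, rfl⟩
  have hle : len n (wprod n (nfWord L)) ≤ (nfWord L).length := Nat.sInf_le hmem
  have hmin := Nat.sInf_mem (⟨_, hmem⟩ :
    {k | ∃ w : List ℕ, IsWord n w ∧ wprod n w = wprod n (nfWord L) ∧ w.length = k}.Nonempty)
  obtain ⟨w₀, hw₀, hprod₀, hlen₀⟩ := hmin
  have h1 : invc (wprod n w₀) ≤ w₀.length := invc_wprod_le w₀ hw₀
  rw [hprod₀, inv_nf L hL] at h1
  rw [len] at hle ⊢
  omega

end Build
section Inj
variable {n : ℕ}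

lemma nf_fix_low {M : List (ℕ×ℕ)} {i j : ℕ} (hL : NFData n (M ++ [(i,j)]))
    (x : Fin (n+1)) (hx : (x:ℕ) + 1 < i) : wprod n (nfWord (M ++ [(i,j)])) x = x := by
  apply P1 _ (fun q hq => hL.2.2 q hq)
  intro p hp
  rw [List.mem_append] at hp
  rcases hp with hp | hp
  · have := (nfdata_last hL p hp).1
    omega
  · simp at hp
    subst hp
    exact hx

lemma nf_move_low {M : List (ℕ×ℕ)} {i j : ℕ} (hL : NFData n (M ++ [(i,j)])) :
    i ≤ ((wprod n (nfWord (M ++ [(i,j)])) (((i-1:ℕ) : Fin (n+1))) : Fin (n+1)) : ℕ) := by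
  have hp := hL.2.2 (i,j) (by simp)
  simp only at hp
  have hM : NFData n M := nfdata_prefix hL
  rw [nfWord_append, nfWord_single, wprod_append, Equiv.Perm.mul_apply]
  have hc : wprod n (seg (i,j).1 (i,j).2) (((i-1:ℕ) : Fin (n+1))) = ((i : ℕ) : Fin (n+1)) := by
    apply Fin.ext
    rw [cyc_spec i hp.1 j hp.2.1 hp.2.2 _, val_cast_le (by omega : i - 1 ≤ n),
      val_cast_le (hp.2.1.trans hp.2.2)]
    rw [if_neg (by omega), if_pos (by omega)]
    omega
  rw [hc]
  rcases List.eq_nil_or_concat M with rfl | ⟨M', q, hMq⟩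
  · simp [nfWord, wprod, val_cast_le (hp.2.1.trans hp.2.2)]
  · have hMne : M ≠ [] := by subst hMq; simp
    have hch : M.Chain' (fun a b => b.2 < a.2) := hM.2.1.imp (fun a b h => h.2)
    have hlast := nfdata_last hL
    have h2 := P2 M hch (fun q hq => hM.2.2 q hq) hMne ((i : Fin (n+1)))
      (by rw [val_cast_le (hp.2.1.trans hp.2.2)]
          exact lt_of_le_of_lt hp.2.1 (hlast _ (List.getLast_mem hMne)).2)
    rw [val_cast_le (hp.2.1.trans hp.2.2)] at h2
    exact h2.1

lemma nf_top {M : List (ℕ×ℕ)} {i j : ℕ} (hL : NFData n (M ++ [(i,j)])) :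
    wprod n (nfWord (M ++ [(i,j)])) ((j : Fin (n+1))) = ((i-1 : ℕ) : Fin (n+1)) := by
  have hp := hL.2.2 (i,j) (by simp)
  simp only at hp
  have hM : NFData n M := nfdata_prefix hL
  rw [nfWord_append, nfWord_single, wprod_append, Equiv.Perm.mul_apply]
  have hc : wprod n (seg (i,j).1 (i,j).2) ((j : Fin (n+1))) = ((i-1 : ℕ) : Fin (n+1)) := by
    apply Fin.ext
    rw [cyc_spec i hp.1 j hp.2.1 hp.2.2 _, val_cast_le hp.2.2,
      val_cast_le (by omega : i - 1 ≤ n), if_neg (by omega), if_neg (by omega), if_pos rfl]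
  rw [hc]
  apply P1 _ (fun q hq => hM.2.2 q hq)
  intro p hpm
  rw [val_cast_le (by omega : i - 1 ≤ n)]
  have := (nfdata_last hL p hpm).1
  omega

lemma nf_ne_one {M : List (ℕ×ℕ)} {i j : ℕ} (hL : NFData n (M ++ [(i,j)])) (g : Equiv.Perm (Fin (n+1)))
    (hg : g = wprod n (nfWord (M ++ [(i,j)]))) : g (((i-1:ℕ) : Fin (n+1))) ≠ ((i-1:ℕ) : Fin (n+1)) := by
  have hp := hL.2.2 (i,j) (by simp)
  simp only at hp
  have := nf_move_low hL
  rw [← hg] at this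
  intro hc
  rw [hc, val_cast_le (by omega : i - 1 ≤ n)] at this
  omega

lemma nf_inj (L : List (ℕ×ℕ)) : ∀ L', NFData n L → NFData n L' →
    wprod n (nfWord L) = wprod n (nfWord L') → L = L' := by
  induction L using List.reverseRecOn with
  | nil =>
    intro L' _ hL' heq
    rcases List.eq_nil_or_concat L' with rfl | ⟨M', q, rfl⟩
    · rfl
    · exfalso
      obtain ⟨i', j'⟩ := q
      rw [List.concat_eq_append] at hL' heq
      exact nf_ne_one hL' _ heq (by simp [nfWord, wprod])
  | append_singleton M p ih =>
    intro L' hL hL' heq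
    obtain ⟨i, j⟩ := p
    rcases List.eq_nil_or_concat L' with rfl | ⟨M', q, rfl⟩
    · exfalso
      exact nf_ne_one hL _ rfl (by rw [heq]; simp [nfWord, wprod])
    · obtain ⟨i', j'⟩ := q
      rw [List.concat_eq_append] at hL' heq ⊢
      have hp := hL.2.2 (i,j) (by simp)
      have hp' := hL'.2.2 (i',j') (by simp)
      simp only at hp hp'
      -- step 1 : i = i'
      have hii : i = i' := by
        rcases Nat.lt_trichotomy i i' with h | h | h
        · exfalso
          have h1 : wprod n (nfWord (M' ++ [(i',j')])) (((i-1:ℕ) : Fin (n+1))) = _ :=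
            nf_fix_low hL' (((i-1:ℕ) : Fin (n+1)))
              (by rw [val_cast_le (by omega : i - 1 ≤ n)]; omega)
          rw [← heq] at h1
          have h2 := nf_move_low hL
          rw [h1, val_cast_le (by omega : i - 1 ≤ n)] at h2
          omega
        · exact h
        · exfalso
          have h1 : wprod n (nfWord (M ++ [(i,j)])) (((i'-1:ℕ) : Fin (n+1))) = _ :=
            nf_fix_low hL (((i'-1:ℕ) : Fin (n+1)))
              (by rw [val_cast_le (by omega : i' - 1 ≤ n)]; omega)
          rw [heq] at h1
          have h2 := nf_move_low hL'
          rw [h1, val_cast_le (by omega : i' - 1 ≤ n)] at h2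
          omega
      subst hii
      -- step 2 : j = j'
      have hjj : j = j' := by
        have h1 := nf_top hL
        have h2 := nf_top hL'
        rw [← heq] at h2
        have h3 : ((j : ℕ) : Fin (n+1)) = ((j' : ℕ) : Fin (n+1)) :=
          (wprod n (nfWord (M ++ [(i,j)]))).injective (h1.trans h2.symm)
        have := congrArg Fin.val h3
        rwa [val_cast_le hp.2.2, val_cast_le hp'.2.2] at this
      subst hjj
      -- step 3 : cancel
      have hM : NFData n M := nfdata_prefix hL
      have hM' : NFData n M' := nfdata_prefix hL'
      have hcancel : wprod n (nfWord M) = wprod n (nfWord M') := by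
        rw [nfWord_append, nfWord_single, wprod_append] at heq
        rw [nfWord_append, nfWord_single, wprod_append] at heq
        exact mul_right_cancel heq
      rw [ih M' hM hM' hcancel]

end Inj
section Sums
variable {n : ℕ}

/-- set of normal forms with last `j` -/
def SL (n j : ℕ) : Set (List (ℕ×ℕ)) := {L | NFData n L ∧ ∃ M i, L = M ++ [(i,j)]}

lemma length_le_of_nfdata {L : List (ℕ×ℕ)} (h : NFData n L) : L.length ≤ n :=
  h.1

lemma SL_finite (n j : ℕ) : (SL n j).Finite := by
  have hsub : SL n j ⊆ (fun l : List (Fin (n+1) × Fin (n+1)) =>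
      l.map (fun q => ((q.1 : ℕ), (q.2 : ℕ)))) '' {l | l.length ≤ n} := by
    rintro L ⟨hNF, -⟩
    refine ⟨L.map (fun p => (((p.1 : ℕ) : Fin (n+1)), ((p.2 : ℕ) : Fin (n+1)))), by
      simpa using hNF.1, ?_⟩
    dsimp only
    rw [List.map_map]
    conv_rhs => rw [← List.map_id L]
    apply List.map_congr_left
    intro p hp
    have hb := hNF.2.2 p hp
    simp [Function.comp, val_cast_le (hb.2.1.trans hb.2.2), val_cast_le hb.2.2]
  exact Set.Finite.subset (Set.Finite.image _ (List.finite_length_le (Fin (n+1) × Fin (n+1)) n)) hsub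

/-- Finset of normal forms with last `j` -/
noncomputable def FLs (n j : ℕ) : Finset (List (ℕ×ℕ)) := (SL_finite n j).toFinset

lemma mem_FLs {L : List (ℕ×ℕ)} {j : ℕ} :
    L ∈ FLs n j ↔ NFData n L ∧ ∃ M i, L = M ++ [(i,j)] := by
  rw [FLs, Set.Finite.mem_toFinset]; rfl

/-- word length -/
def wlen (L : List (ℕ×ℕ)) : ℕ := (L.map (fun p => p.2 + 1 - p.1)).sum

lemma nfWord_length (L : List (ℕ×ℕ)) : (nfWord L).length = wlen L := by
  rw [nfWord, wlen, List.length_flatten, List.map_map]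
  congr 1
  apply List.map_congr_left
  intro p _
  simp [seg]

lemma anj_eq_sum (n j : ℕ) : anj n j = ∑ L ∈ FLs n j, (X : Polynomial ℤ) ^ wlen L := by
  rw [anj]
  symm
  apply Finset.sum_bij (i := fun L _ => wprod n (nfWord L))
  · intro L hL
    rw [mem_FLs] at hL
    obtain ⟨hNF, M, i, rfl⟩ := hL
    rw [Set.Finite.mem_toFinset]
    refine ⟨M ++ [(i,j)], hNF, rfl, by simp, ?_⟩
    simp
  · intro L1 h1 L2 h2 heq
    rw [mem_FLs] at h1 h2
    exact nf_inj L1 L2 h1.1 h2.1 heq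
  · intro g hg
    rw [Set.Finite.mem_toFinset] at hg
    obtain ⟨L, hNF, hprod, hne, hlast⟩ := hg
    refine ⟨L, ?_, hprod⟩
    rw [mem_FLs]
    refine ⟨hNF, L.dropLast, (L.getLast hne).1, ?_⟩
    conv_lhs => rw [← List.dropLast_append_getLast hne]
    congr 1
    rw [← hlast]
  · intro L hL
    rw [mem_FLs] at hL
    rw [len_nf L hL.1, nfWord_length]

end Sums
section Comb
variable {n : ℕ}

def upL (L : List (ℕ×ℕ)) : List (ℕ×ℕ) := L.map (fun p => (p.1+1, p.2+1))
def downL (L : List (ℕ×ℕ)) : List (ℕ×ℕ) := L.map (fun p => (p.1-1, p.2-1))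

lemma upL_append (A B : List (ℕ×ℕ)) : upL (A ++ B) = upL A ++ upL B := List.map_append
lemma downL_append (A B : List (ℕ×ℕ)) : downL (A ++ B) = downL A ++ downL B := List.map_append

lemma upL_downL {L : List (ℕ×ℕ)} (h : ∀ p ∈ L, 1 ≤ p.1 ∧ 1 ≤ p.2) : upL (downL L) = L := by
  rw [upL, downL, List.map_map]
  conv_rhs => rw [← List.map_id L]
  apply List.map_congr_left
  intro p hp
  have := h p hp
  obtain ⟨a, b⟩ := p
  simp only [Function.comp, id] at this ⊢
  rw [Prod.mk.injEq]
  constructor <;> omega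

lemma downL_upL (L : List (ℕ×ℕ)) : downL (upL L) = L := by
  rw [upL, downL, List.map_map]
  conv_rhs => rw [← List.map_id L]
  apply List.map_congr_left
  intro p hp
  obtain ⟨a, b⟩ := p
  simp [Function.comp]

lemma upL_injective : Function.Injective upL :=
  List.map_injective_iff.mpr (by
    rintro ⟨a,b⟩ ⟨c,d⟩ h
    rw [Prod.mk.injEq] at h ⊢
    omega)

lemma wlen_upL (L : List (ℕ×ℕ)) : wlen (upL L) = wlen L := by
  rw [wlen, upL, List.map_map, wlen]
  congr 1
  apply List.map_congr_left
  intro p _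
  show p.2 + 1 + 1 - (p.1 + 1) = p.2 + 1 - p.1
  omega

lemma wlen_downL {L : List (ℕ×ℕ)} (h : ∀ p ∈ L, 1 ≤ p.1 ∧ p.1 ≤ p.2) : wlen (downL L) = wlen L := by
  rw [wlen, downL, List.map_map, wlen]
  congr 1
  apply List.map_congr_left
  intro p hp
  have := h p hp
  show p.2 - 1 + 1 - (p.1 - 1) = p.2 + 1 - p.1
  omega

lemma wlen_append (A B : List (ℕ×ℕ)) : wlen (A ++ B) = wlen A + wlen B := by
  rw [wlen, List.map_append, List.sum_append]; rfl

lemma len_le_of_chain {L : List (ℕ×ℕ)} (hch : L.Chain' Rnf)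
    (hb : ∀ p ∈ L, 2 ≤ p.1 ∧ p.1 ≤ n) : L.length ≤ n - 1 := by
  have hpw : List.Pairwise Rnf L := List.isChain_iff_pairwise.mp hch
  have hpw1 : List.Pairwise (fun a b : ℕ => b < a) (L.map Prod.fst) :=
    List.pairwise_map.mpr (hpw.imp (fun h => h.1))
  have hnd : (L.map Prod.fst).Nodup := hpw1.imp (fun h => (ne_of_gt h))
  have hsub : (L.map Prod.fst).toFinset ⊆ Finset.Icc 2 n := by
    intro x hx
    rw [List.mem_toFinset, List.mem_map] at hx
    obtain ⟨p, hp, rfl⟩ := hx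
    have := hb p hp
    rw [Finset.mem_Icc]
    omega
  have hcard := Finset.card_le_card hsub
  rw [List.toFinset_card_of_nodup hnd, Nat.card_Icc] at hcard
  rw [← List.length_map (as := L) Prod.fst]
  omega

lemma NFData_upL {m : ℕ} {L : List (ℕ×ℕ)} (h : NFData m L) :
    NFData (m+1) (upL L) ∧ ∀ p ∈ upL L, 2 ≤ p.1 := by
  obtain ⟨h1, h2, h3⟩ := h
  refine ⟨⟨?_, ?_, ?_⟩, ?_⟩
  · rw [upL, List.length_map]; exact le_trans h1 (Nat.le_succ m)
  · rw [upL]; simp only [List.Chain']; rw [List.isChain_map]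
    exact h2.imp (fun {a b} hab => ⟨by omega, by omega⟩)
  · intro p hp
    rw [upL, List.mem_map] at hp
    obtain ⟨q, hq, rfl⟩ := hp
    have := h3 q hq
    refine ⟨by omega, by omega, by omega⟩
  · intro p hp
    rw [upL, List.mem_map] at hp
    obtain ⟨q, hq, rfl⟩ := hp
    have := h3 q hq
    show 2 ≤ q.1 + 1
    omega

lemma NFData_downL {L : List (ℕ×ℕ)} (hch : L.Chain' Rnf)
    (hb : ∀ p ∈ L, 2 ≤ p.1 ∧ p.1 ≤ p.2 ∧ p.2 ≤ n) : NFData (n-1) (downL L) := by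
  refine ⟨?_, ?_, ?_⟩
  · rw [downL, List.length_map]
    exact len_le_of_chain hch (fun p hp => ⟨(hb p hp).1, ((hb p hp).2.1.trans (hb p hp).2.2)⟩)
  · rw [downL]; simp only [List.Chain']; rw [List.isChain_map]
    apply List.Pairwise.isChain
    apply (List.isChain_iff_pairwise.mp hch).imp_of_mem
    intro a b ha hb'
    intro hab
    have h1 := hb a ha
    have h2 := hb b hb'
    exact ⟨by omega, by omega⟩
  · intro p hp
    rw [downL, List.mem_map] at hp
    obtain ⟨q, hq, rfl⟩ := hp
    have := hb q hq
    refine ⟨by omega, by omega, by omega⟩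

end Comb
section Main
open Classical in
lemma sumD1 (n j : ℕ) (hj : 1 ≤ j) (hjn : j ≤ n) :
    ∑ L ∈ (FLs n j).filter (fun L => ∀ p ∈ L, 2 ≤ p.1), (X : Polynomial ℤ)^wlen L
      = ∑ L ∈ FLs (n-1) (j-1), (X : Polynomial ℤ)^wlen L := by
  apply Finset.sum_nbij' (i := downL) (j := upL)
  · intro L hL
    rw [Finset.mem_filter, mem_FLs] at hL
    obtain ⟨⟨hNF, M, i, rfl⟩, h2⟩ := hL
    rw [mem_FLs]
    refine ⟨NFData_downL hNF.2.1 (fun p hp => ⟨h2 p hp, (hNF.2.2 p hp).2.1, (hNF.2.2 p hp).2.2⟩),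
      downL M, i - 1, ?_⟩
    rw [downL_append]
    rfl
  · intro L hL
    rw [mem_FLs] at hL
    obtain ⟨hNF, M, i, rfl⟩ := hL
    have hup := NFData_upL hNF
    rw [Finset.mem_filter, mem_FLs]
    have hn1 : n - 1 + 1 = n := by omega
    refine ⟨⟨by rw [← hn1]; exact hup.1, upL M, i + 1, ?_⟩, hup.2⟩
    rw [upL_append]
    have hj1 : j - 1 + 1 = j := by omega
    show upL M ++ [(i+1, (j-1)+1)] = upL M ++ [(i+1, j)]
    rw [hj1]
  · intro L hL
    rw [Finset.mem_filter, mem_FLs] at hL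
    exact upL_downL (fun p hp => ⟨(hL.1.1.2.2 p hp).1, by
      have := hL.1.1.2.2 p hp; omega⟩)
  · intro L _
    exact downL_upL L
  · intro L hL
    rw [Finset.mem_filter, mem_FLs] at hL
    rw [wlen_downL (fun p hp => ⟨(hL.1.1.2.2 p hp).1, (hL.1.1.2.2 p hp).2.1⟩)]

open Classical in
lemma sumD2 (n j : ℕ) (hj : 1 ≤ j) (hjn : j ≤ n) :
    ∑ L ∈ (FLs n j).filter (fun L => ¬ ∀ p ∈ L, 2 ≤ p.1), (X : Polynomial ℤ)^wlen L
      = X^j * (1 + ∑ s ∈ Finset.Icc j (n-1), ∑ L ∈ FLs (n-1) s, (X : Polynomial ℤ)^wlen L) := by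
  set E : Finset (List (ℕ×ℕ)) := insert ([] : List (ℕ×ℕ))
    ((Finset.Icc j (n-1)).biUnion (fun s => (FLs (n-1) s).image upL)) with hE
  -- last pair of a D2 element is (1, j)
  have hlast1 : ∀ L ∈ (FLs n j).filter (fun L => ¬ ∀ p ∈ L, 2 ≤ p.1),
      ∃ M, L = M ++ [(1,j)] ∧ NFData n (M ++ [(1,j)]) := by
    intro L hL
    rw [Finset.mem_filter, mem_FLs] at hL
    obtain ⟨⟨hNF, M, i, rfl⟩, h2⟩ := hL
    push_neg at h2
    obtain ⟨p, hp, hp1⟩ := h2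
    have hi1 : i = 1 := by
      have hbi := hNF.2.2 (i, j) (by simp)
      rw [List.mem_append] at hp
      rcases hp with hp | hp
      · have := (nfdata_last hNF p hp).1
        have := hNF.2.2 p (by simp [hp])
        omega
      · simp at hp
        subst hp
        simp only at hp1 ⊢
        omega
    subst hi1
    exact ⟨M, rfl, hNF⟩
  have step1 : ∑ L ∈ (FLs n j).filter (fun L => ¬ ∀ p ∈ L, 2 ≤ p.1),
      (X : Polynomial ℤ)^wlen L = ∑ M ∈ E, (X : Polynomial ℤ)^(wlen M + j) := by
    apply Finset.sum_nbij' (i := List.dropLast) (j := fun M => M ++ [(1,j)])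
    · intro L hL
      obtain ⟨M, rfl, hNF⟩ := hlast1 L hL
      rw [List.dropLast_concat, hE]
      rcases List.eq_nil_or_concat M with rfl | ⟨M', q, hMq⟩
      · exact Finset.mem_insert_self _ _
      · rw [List.concat_eq_append] at hMq
        subst hMq
        apply Finset.mem_insert_of_mem
        rw [Finset.mem_biUnion]
        have hall := nfdata_last hNF
        have hq : q ∈ M' ++ [q] := by simp
        have hq2 := hNF.2.2 q (by simp)
        refine ⟨q.2 - 1, ?_, ?_⟩
        · rw [Finset.mem_Icc]
          have := (hall q hq).2
          omega
        · rw [Finset.mem_image]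
          have hchM : (M' ++ [q]).Chain' Rnf := (List.isChain_append.mp hNF.2.1).1
          have hbM : ∀ p ∈ M' ++ [q], 2 ≤ p.1 ∧ p.1 ≤ p.2 ∧ p.2 ≤ n := by
            intro p hp
            have h1 := (hall p hp).1
            have h2 := hNF.2.2 p (by rw [List.mem_append]; left; exact hp)
            exact ⟨by omega, h2.2.1, h2.2.2⟩
          refine ⟨downL (M' ++ [q]), ?_, ?_⟩
          · rw [mem_FLs]
            refine ⟨NFData_downL hchM hbM, downL M', q.1 - 1, ?_⟩
            rw [downL_append]
            rfl
          · exact upL_downL (fun p hp => by have := hbM p hp; exact ⟨by omega, by omega⟩)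
    · intro M hM
      rw [Finset.mem_filter, mem_FLs]
      rw [hE, Finset.mem_insert] at hM
      rcases hM with rfl | hM
      · refine ⟨⟨⟨by simp; omega, List.isChain_singleton _, ?_⟩, [], 1, by simp⟩, ?_⟩
        · intro p hp
          simp at hp
          subst hp
          exact ⟨le_refl 1, hj, hjn⟩
        · push_neg
          exact ⟨(1,j), by simp, by omega⟩
      · rw [Finset.mem_biUnion] at hM
        obtain ⟨s, hs, hMs⟩ := hM
        rw [Finset.mem_Icc] at hs
        rw [Finset.mem_image] at hMs
        obtain ⟨M', hM', rfl⟩ := hMs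
        rw [mem_FLs] at hM'
        obtain ⟨hNF', A, i', rfl⟩ := hM'
        have hup := NFData_upL hNF'
        have hn1 : n - 1 + 1 = n := by omega
        rw [hn1] at hup
        constructor
        · refine ⟨⟨?_, ?_, ?_⟩, upL (A ++ [(i', s)]), 1, rfl⟩
          · rw [List.length_append]
            have h1 := hup.1.1
            have h2 : (upL (A ++ [(i',s)])).length ≤ n - 1 := by
              apply len_le_of_chain hup.1.2.1
              intro p hp
              exact ⟨hup.2 p hp, ((hup.1.2.2 p hp).2.1.trans (hup.1.2.2 p hp).2.2)⟩
            simp only [List.length_singleton]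
            omega
          · simp only [List.Chain']; rw [List.isChain_append]
            refine ⟨hup.1.2.1, List.isChain_singleton _, ?_⟩
            intro x hx y hy
            simp at hy
            subst hy
            rw [upL_append, show upL [(i', s)] = [((i'+1 : ℕ), (s+1 : ℕ))] from rfl] at hx
            rw [List.getLast?_concat] at hx
            simp at hx
            subst hx
            have hb' := hNF'.2.2 (i', s) (by simp)
            constructor
            · show 1 < i' + 1
              omega
            · show j < s + 1
              omega
          · intro p hp
            rw [List.mem_append] at hp
            rcases hp with hp | hp
            · exact hup.1.2.2 p hp
            · simp at hp
              subst hp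
              exact ⟨le_refl 1, hj, hjn⟩
        · push_neg
          exact ⟨(1,j), by simp, by omega⟩
    · intro L hL
      obtain ⟨M, rfl, _⟩ := hlast1 L hL
      rw [List.dropLast_concat]
    · intro M _
      rw [List.dropLast_concat]
    · intro L hL
      obtain ⟨M, rfl, _⟩ := hlast1 L hL
      rw [List.dropLast_concat, wlen_append,
        show wlen [(1,j)] = j from by simp [wlen]]
  rw [step1]
  have hnm : ([] : List (ℕ×ℕ)) ∉ (Finset.Icc j (n-1)).biUnion (fun s => (FLs (n-1) s).image upL) := by
    rw [Finset.mem_biUnion]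
    rintro ⟨s, _, hmem⟩
    rw [Finset.mem_image] at hmem
    obtain ⟨M', hM', hup⟩ := hmem
    rw [mem_FLs] at hM'
    obtain ⟨_, A, i', rfl⟩ := hM'
    rw [upL_append, show upL [(i', s)] = [((i'+1 : ℕ), (s+1 : ℕ))] from rfl] at hup
    simp at hup
  have hdisj : (↑(Finset.Icc j (n-1)) : Set ℕ).PairwiseDisjoint
      (fun s => (FLs (n-1) s).image upL) := by
    intro s _ t _ hst
    refine Finset.disjoint_left.mpr ?_
    intro L hLs hLt
    rw [Finset.mem_image] at hLs hLt
    obtain ⟨M1, hM1, rfl⟩ := hLs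
    obtain ⟨M2, hM2, hM12⟩ := hLt
    rw [mem_FLs] at hM1 hM2
    obtain ⟨-, A, a, rfl⟩ := hM1
    obtain ⟨-, B, b, rfl⟩ := hM2
    rw [upL_append, upL_append, show upL [(a, s)] = [((a+1 : ℕ), (s+1 : ℕ))] from rfl,
      show upL [(b, t)] = [((b+1 : ℕ), (t+1 : ℕ))] from rfl] at hM12
    have h1 := List.getLast?_concat (l := upL A) (a := ((a+1 : ℕ), (s+1 : ℕ)))
    have h2 := List.getLast?_concat (l := upL B) (a := ((b+1 : ℕ), (t+1 : ℕ)))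
    rw [← hM12] at h1
    rw [h2] at h1
    simp at h1
    exact hst (by omega)
  rw [hE, Finset.sum_insert hnm, Finset.sum_biUnion hdisj]
  have himg : ∀ s ∈ Finset.Icc j (n-1),
      ∑ M ∈ (FLs (n-1) s).image upL, (X : Polynomial ℤ)^(wlen M + j)
        = ∑ M ∈ FLs (n-1) s, (X : Polynomial ℤ)^(wlen M + j) := by
    intro s _
    rw [Finset.sum_image (fun a _ b _ h => upL_injective h)]
    apply Finset.sum_congr rfl
    intro M _
    rw [wlen_upL]
  rw [Finset.sum_congr rfl himg]
  simp only [wlen, List.map_nil, List.sum_nil, zero_add, pow_add]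
  simp only [← Finset.sum_mul]
  ring

end Main
theorem stmt4 :
    (∀ m : ℕ, anj m 0 = 0) ∧ (∀ m j : ℕ, m < j → anj m j = 0) ∧
    ∀ n j : ℕ, 1 ≤ j → j ≤ n →
      anj n j = anj (n-1) (j-1) +
        X ^ j * (1 + ∑ s ∈ Finset.Icc j (n-1), anj (n-1) s) := by
  refine ⟨?_, ?_, ?_⟩
  · intro m
    rw [anj_eq_sum]
    have he : FLs m 0 = ∅ := by
      apply Finset.eq_empty_of_forall_notMem
      intro L hL
      rw [mem_FLs] at hL
      obtain ⟨hNF, M, i, rfl⟩ := hL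
      have := hNF.2.2 (i, 0) (by simp)
      omega
    rw [he, Finset.sum_empty]
  · intro m j hmj
    rw [anj_eq_sum]
    have he : FLs m j = ∅ := by
      apply Finset.eq_empty_of_forall_notMem
      intro L hL
      rw [mem_FLs] at hL
      obtain ⟨hNF, M, i, rfl⟩ := hL
      have := hNF.2.2 (i, j) (by simp)
      omega
    rw [he, Finset.sum_empty]
  · intro n j hj hjn
    classical
    rw [anj_eq_sum n j,
      ← Finset.sum_filter_add_sum_filter_not (FLs n j) (fun L => ∀ p ∈ L, 2 ≤ p.1)
        (fun L => (X : Polynomial ℤ)^wlen L),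
      sumD1 n j hj hjn, sumD2 n j hj hjn]
    simp only [anj_eq_sum]
end
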